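/- arXiv:2212.11592 — 12 statements merged into one kernel-verified Lean document; each statement's English description precedes it below -/
import Mathlib

section
/- Let γ ∈ ℝ with 0 < γ ≤ 1/4. Then c_n > 0 for every n ≥ 0. -/
/-- If `0 < γ ≤ 1/4` then all the trace coefficients `c n` are positive. -/
theorem stmt_2 (γ : ℝ) (hγ0 : 0 < γ) (hγ4 : γ ≤ 1 / 4)
    (c : ℤ → ℝ)
    (hcneg : ∀ m : ℤ, m < 0 → c m = 0)
    (hc0 : c 0 = 1) (hc1 : c 1 = 1)
    (hcrec : ∀ n : ℕ, c ((n : ℤ) + 2) = c ((n : ℤ) + 1) - γ * c (n : ℤ)) :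
    ∀ n : ℕ, 0 < c (n : ℤ) := by
  have key : ∀ n : ℕ, 0 < c (n : ℤ) ∧ c (n : ℤ) / 2 ≤ c ((n : ℤ) + 1) := by
    intro n
    induction n with
    | zero => simp [hc0, hc1]; norm_num
    | succ k ih =>
      obtain ⟨hpos, hhalf⟩ := ih
      have hpos' : 0 < c ((k : ℤ) + 1) := lt_of_lt_of_le (by linarith) hhalf
      constructor
      · push_cast; exact hpos'
      · have hrec := hcrec k
        have : γ * c (k : ℤ) ≤ c ((k : ℤ) + 1) / 2 := by
          calc γ * c (k : ℤ) ≤ (1/4) * c (k : ℤ) := by nlinarith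
            _ ≤ c ((k : ℤ) + 1) / 2 := by linarith
        push_cast
        rw [show ((k : ℤ) + 1 + 1) = (k : ℤ) + 2 by ring]
        linarith [hrec]
  exact fun n => (key n).1
end

section
/- Let k ∈ ℕ with k ≥ 3, and let γ = 1/(4·cos²(π/k)). Then c_n > 0 for all 0 ≤ n ≤ k − 2, and c_{k−1} = 0. -/
/-- For `k ≥ 3` and `γ = 1/(4 cos²(π/k))`, the coefficients `c n` are positive
for `0 ≤ n ≤ k - 2` and `c (k-1) = 0`. -/
theorem stmt_3 (k : ℕ) (hk : 3 ≤ k)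
    (γ : ℝ) (hγ : γ = 1 / (4 * Real.cos (Real.pi / k) ^ 2))
    (c : ℤ → ℝ)
    (hcneg : ∀ m : ℤ, m < 0 → c m = 0)
    (hc0 : c 0 = 1) (hc1 : c 1 = 1)
    (hcrec : ∀ n : ℕ, c ((n : ℤ) + 2) = c ((n : ℤ) + 1) - γ * c (n : ℤ)) :
    (∀ n : ℕ, n ≤ k - 2 → 0 < c (n : ℤ)) ∧ c ((k : ℤ) - 1) = 0 := by
  have hkR : (3:ℝ) ≤ (k:ℝ) := by exact_mod_cast hk
  have hk0 : (0:ℝ) < (k:ℝ) := by linarith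
  set θ : ℝ := Real.pi / k with hθdef
  have hpi := Real.pi_pos
  have hθpos : 0 < θ := div_pos hpi hk0
  have hθlt : θ < Real.pi / 2 := by
    rw [hθdef, div_lt_div_iff₀ hk0 (by norm_num : (0:ℝ) < 2)]
    nlinarith
  have hcos : 0 < Real.cos θ :=
    Real.cos_pos_of_mem_Ioo ⟨by linarith, hθlt⟩
  have hsin : 0 < Real.sin θ :=
    Real.sin_pos_of_pos_of_lt_pi hθpos (by linarith)
  have h2c : (0:ℝ) < 2 * Real.cos θ := by linarith
  have hγ' : γ * (2 * Real.cos θ) ^ 2 = 1 := by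
    rw [hγ]; field_simp; ring
  -- closed form
  have key : ∀ n : ℕ, c (n : ℤ) = Real.sin ((n + 1) * θ) / (Real.sin θ * (2 * Real.cos θ) ^ n) ∧
      c ((n : ℤ) + 1) = Real.sin ((n + 2) * θ) / (Real.sin θ * (2 * Real.cos θ) ^ (n + 1)) := by
    intro n
    induction n with
    | zero =>
      constructor
      · simp [hc0, div_self (ne_of_gt hsin)]
      · show c 1 = _
        rw [hc1]
        rw [eq_div_iff (by positivity)]
        have : ((0:ℕ) + 2 : ℝ) * θ = θ + θ := by ring
        rw [this, Real.sin_add]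
        ring
    | succ n ih =>
      obtain ⟨h1, h2⟩ := ih
      refine ⟨by exact_mod_cast h2, ?_⟩
      have hrec := hcrec n
      have hcast : ((n:ℤ) + 1 + 1 : ℤ) = (n:ℤ) + 2 := by ring
      push_cast
      have : c ((n:ℤ) + 1 + 1) = c ((n:ℤ) + 1) - γ * c (n:ℤ) := by
        rw [show ((n:ℤ) + 1 + 1 : ℤ) = (n:ℤ) + 2 by ring]; exact hrec
      rw [this, h1, h2]
      have hsin3 : Real.sin (((n:ℝ) + 1 + 2) * θ)
          = 2 * Real.cos θ * Real.sin (((n:ℝ) + 2) * θ) - Real.sin (((n:ℝ) + 1) * θ) := by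
        have e1 : ((n:ℝ) + 1 + 2) * θ = ((n:ℝ) + 2) * θ + θ := by ring
        have e2 : ((n:ℝ) + 1) * θ = ((n:ℝ) + 2) * θ - θ := by ring
        rw [e1, e2, Real.sin_add, Real.sin_sub]
        ring
      rw [hsin3]
      have hγ2 : γ = 1 / (2 * Real.cos θ) ^ 2 := by
        field_simp at hγ' ⊢; linarith
      rw [hγ2]
      field_simp
      ring
  constructor
  · intro n hn
    have hle : n + 1 ≤ k - 1 := by omega
    have hleR : (n:ℝ) + 1 ≤ (k:ℝ) - 1 := by
      have : ((n:ℕ) + 1 : ℝ) ≤ ((k - 1 : ℕ) : ℝ) := by exact_mod_cast hle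
      have hk1 : ((k - 1 : ℕ) : ℝ) = (k:ℝ) - 1 := by
        have : 1 ≤ k := by omega
        push_cast [this]; ring
      linarith [hk1 ▸ this]
    have hlt : ((n:ℝ) + 1) * θ < Real.pi := by
      rw [hθdef, ← mul_div_assoc, div_lt_iff₀ hk0]
      nlinarith
    have hsinn : 0 < Real.sin (((n:ℝ) + 1) * θ) :=
      Real.sin_pos_of_pos_of_lt_pi (by positivity) hlt
    rw [(key n).1]
    positivity
  · have hk1 : ((k : ℤ) - 1) = ((k - 1 : ℕ) : ℤ) := by omega
    rw [hk1, (key (k-1)).1]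
    have : (((k-1:ℕ):ℝ) + 1) * θ = Real.pi := by
      have h1 : ((k-1:ℕ):ℝ) = (k:ℝ) - 1 := by
        have : 1 ≤ k := by omega
        push_cast [this]; ring
      rw [h1, hθdef]
      field_simp
      ring
    rw [this, Real.sin_pi, zero_div]
end

section
/- For every parameter γ ∈ ℂ and every n ≥ 0, the identity ∑_{i=0}^{⌊n/2⌋} γ^i · c_{n−2i} · (binom(n,i) − binom(n,i−1)) = 1 holds, where binom(n,−1) := 0. -/
noncomputable def dd4 (n i : ℕ) : ℂ :=
  (n.choose i : ℂ) - (if i = 0 then 0 else (n.choose (i - 1) : ℂ))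

lemma dd4_pascal (n i : ℕ) :
    dd4 (n + 2) i = dd4 (n + 1) i + (if i = 0 then 0 else dd4 (n + 1) (i - 1)) := by
  match i with
  | 0 => simp [dd4]
  | 1 =>
    simp only [dd4, Nat.choose_one_right, Nat.choose_zero_right, if_neg (Nat.succ_ne_zero 0),
      Nat.sub_self, if_pos rfl]
    push_cast
    ring
  | (i + 2) =>
    have e1 : (n + 2).choose (i + 2) = (n + 1).choose (i + 1) + (n + 1).choose (i + 2) :=
      Nat.choose_succ_succ _ _
    have e2 : (n + 2).choose (i + 1) = (n + 1).choose i + (n + 1).choose (i + 1) :=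
      Nat.choose_succ_succ _ _
    simp only [dd4, if_neg (Nat.succ_ne_zero _), show i + 2 - 1 = i + 1 from rfl,
      show i + 1 - 1 = i from rfl, e1, e2]
    push_cast
    ring

lemma dd4_mid (i : ℕ) (hi : 1 ≤ i) : dd4 (2 * i - 1) i = 0 := by
  have h1 : i ≤ 2 * i - 1 := by omega
  have h2 : (2 * i - 1) - i = i - 1 := by omega
  have := Nat.choose_symm h1
  rw [h2] at this
  have hne : i ≠ 0 := by omega
  simp only [dd4, hne, if_false, this]
  ring

theorem key4 (γ : ℂ) (c : ℤ → ℂ)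
    (hcneg : ∀ m : ℤ, m < 0 → c m = 0)
    (hc0 : c 0 = 1) (hc1 : c 1 = 1)
    (hcrec : ∀ n : ℕ, c ((n : ℤ) + 2) = c ((n : ℤ) + 1) - γ * c (n : ℤ)) :
    ∀ n : ℕ, ∑ i ∈ Finset.range (n + 1),
      γ ^ i * c ((n : ℤ) - 2 * (i : ℤ)) * dd4 n i = 1 := by
  -- pointwise recurrence including degenerate cases
  have step : ∀ n i : ℕ,
      c ((n : ℤ) + 2 - 2 * i) * dd4 (n + 1) i
        = (c ((n : ℤ) + 1 - 2 * i) - γ * c ((n : ℤ) - 2 * i)) * dd4 (n + 1) i := by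
    intro n i
    rcases le_or_gt 0 ((n : ℤ) - 2 * i) with h | h
    · obtain ⟨m, hm⟩ := Int.eq_ofNat_of_zero_le h
      have h2 : (n : ℤ) + 2 - 2 * i = (m : ℤ) + 2 := by omega
      have h1 : (n : ℤ) + 1 - 2 * i = (m : ℤ) + 1 := by omega
      rw [h2, h1, hm, hcrec m]
    · rcases eq_or_lt_of_le (by omega : (n : ℤ) - 2 * i ≤ -1) with h1 | h1
      · -- n - 2i = -1
        have e2 : (n : ℤ) + 2 - 2 * i = 1 := by omega
        have e1 : (n : ℤ) + 1 - 2 * i = 0 := by omega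
        rw [e2, e1, h1, hc1, hc0, hcneg (-1) (by norm_num)]
        ring
      · rcases eq_or_lt_of_le (by omega : (n : ℤ) - 2 * i ≤ -2) with h2 | h2
        · -- n - 2i = -2 : middle binomial vanishes
          have hi : 1 ≤ i := by omega
          have hn : n + 1 = 2 * i - 1 := by omega
          rw [hn, dd4_mid i hi]
          ring
        · -- everything negative
          rw [hcneg _ (by omega : (n : ℤ) + 2 - 2 * i < 0),
              hcneg _ (by omega : (n : ℤ) + 1 - 2 * i < 0),
              hcneg _ (by omega : (n : ℤ) - 2 * i < 0)]
          ring
  intro n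
  induction n using Nat.twoStepInduction with
  | zero => simp [dd4, hc0]
  | one =>
    rw [Finset.sum_range_succ, Finset.sum_range_succ, Finset.sum_range_zero]
    norm_num [dd4, hc1, hcneg (-1) (by norm_num)]
  | more n _ ih1 =>
    have hsplit : ∑ i ∈ Finset.range (n + 2 + 1),
        γ ^ i * c (((n : ℕ) + 2 : ℕ) - 2 * (i : ℤ)) * dd4 (n + 2) i
      = ∑ i ∈ Finset.range (n + 2 + 1),
          ((γ ^ i * c ((n : ℤ) + 1 - 2 * i) * dd4 (n + 1) i
            - γ * (γ ^ i * c ((n : ℤ) - 2 * i) * dd4 (n + 1) i))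
           + γ ^ i * c ((n : ℤ) + 2 - 2 * i)
              * (if i = 0 then 0 else dd4 (n + 1) (i - 1))) := by
      refine Finset.sum_congr rfl fun i _ => ?_
      rw [dd4_pascal]
      push_cast
      linear_combination (γ ^ i) * step n i
    rw [hsplit, Finset.sum_add_distrib, Finset.sum_sub_distrib]
    -- first sum: drop last term, equals 1 by ih1
    have hA : ∑ i ∈ Finset.range (n + 2 + 1),
        γ ^ i * c ((n : ℤ) + 1 - 2 * i) * dd4 (n + 1) i = 1 := by
      rw [Finset.sum_range_succ, hcneg ((n : ℤ) + 1 - 2 * (n + 2 : ℕ)) (by omega)]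
      simp only [mul_zero, zero_mul, add_zero]
      rw [← ih1]
      refine Finset.sum_congr rfl fun i _ => ?_
      push_cast
      ring
    -- second sum
    have hB : ∑ i ∈ Finset.range (n + 2 + 1),
        γ * (γ ^ i * c ((n : ℤ) - 2 * i) * dd4 (n + 1) i)
      = γ * ∑ i ∈ Finset.range (n + 2),
          γ ^ i * c ((n : ℤ) - 2 * i) * dd4 (n + 1) i := by
      rw [← Finset.mul_sum, Finset.sum_range_succ,
        hcneg ((n : ℤ) - 2 * (n + 2 : ℕ)) (by omega)]
      simp
    -- third sum: shift index
    have hC : ∑ i ∈ Finset.range (n + 2 + 1),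
        γ ^ i * c ((n : ℤ) + 2 - 2 * i) * (if i = 0 then 0 else dd4 (n + 1) (i - 1))
      = γ * ∑ i ∈ Finset.range (n + 2),
          γ ^ i * c ((n : ℤ) - 2 * i) * dd4 (n + 1) i := by
      rw [Finset.sum_range_succ']
      have h0 : γ ^ 0 * c ((n : ℤ) + 2 - 2 * ((0 : ℕ) : ℤ))
          * (if (0 : ℕ) = 0 then (0 : ℂ) else dd4 (n + 1) (0 - 1)) = 0 := by simp
      rw [h0, add_zero, Finset.mul_sum]
      refine Finset.sum_congr rfl fun i _ => ?_
      rw [if_neg (Nat.succ_ne_zero i), Nat.add_sub_cancel,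
        show ((n : ℤ) + 2 - 2 * ((i : ℕ) + 1 : ℕ)) = (n : ℤ) - 2 * i by push_cast; ring]
      ring
    rw [hA, hB, hC]
    ring

/-- Normalization identity: `∑_{i=0}^{⌊n/2⌋} γ^i c_{n-2i} (binom(n,i) - binom(n,i-1)) = 1`,
where `binom(n,-1) := 0`. -/
theorem stmt_4 (γ : ℂ)
    (c : ℤ → ℂ)
    (hcneg : ∀ m : ℤ, m < 0 → c m = 0)
    (hc0 : c 0 = 1) (hc1 : c 1 = 1)
    (hcrec : ∀ n : ℕ, c ((n : ℤ) + 2) = c ((n : ℤ) + 1) - γ * c (n : ℤ)) :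
    ∀ n : ℕ,
      ∑ i ∈ Finset.range (n / 2 + 1),
        γ ^ i * c ((n : ℤ) - 2 * (i : ℤ)) *
          ((n.choose i : ℂ) - (if i = 0 then 0 else (n.choose (i - 1) : ℂ))) = 1 := by
  intro n
  have hkey := key4 γ c hcneg hc0 hc1 hcrec n
  have hsub : ∑ i ∈ Finset.range (n / 2 + 1),
      γ ^ i * c ((n : ℤ) - 2 * (i : ℤ)) * dd4 n i
    = ∑ i ∈ Finset.range (n + 1),
      γ ^ i * c ((n : ℤ) - 2 * (i : ℤ)) * dd4 n i := by
    refine Finset.sum_subset (Finset.range_subset_range.mpr (by omega)) fun i hi hni => ?_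
    simp only [Finset.mem_range] at hi hni
    rw [hcneg ((n : ℤ) - 2 * i) (by omega)]
    ring
  unfold dd4 at hsub
  rw [hsub, ← hkey]
  rfl
end

section
/- Let A be the free ℝ-module with basis {a_{(n,i)} : (n,i) ∈ ℕ × ℕ} (finitely supported functions ℕ × ℕ → ℝ), equipped with the unique bilinear multiplication determined on basis elements by a_{(n,i)} · a_{(m,j)} = a_{(n+m, i+j)} + a_{(n+m, i+j+1)}. Then this multiplication is commutative and associative. -/
/-- The graph algebra of the generic Temperley–Lieb Bratteli diagram: the unique
bilinear multiplication on the free ℝ-module with basis `ℕ × ℕ` determined by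
`a_{(n,i)} · a_{(m,j)} = a_{(n+m,i+j)} + a_{(n+m,i+j+1)}` is commutative and
associative. -/
theorem stmt_5
    (mul : ((ℕ × ℕ) →₀ ℝ) →ₗ[ℝ] ((ℕ × ℕ) →₀ ℝ) →ₗ[ℝ] ((ℕ × ℕ) →₀ ℝ))
    (hmul : ∀ n i m j : ℕ,
      mul (Finsupp.single (n, i) 1) (Finsupp.single (m, j) 1) =
        Finsupp.single (n + m, i + j) 1 + Finsupp.single (n + m, i + j + 1) 1) :
    (∀ x y : (ℕ × ℕ) →₀ ℝ, mul x y = mul y x) ∧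
    (∀ x y z : (ℕ × ℕ) →₀ ℝ, mul (mul x y) z = mul x (mul y z)) := by
  have key : ∀ (p q : ℕ × ℕ), mul (Finsupp.single p 1) (Finsupp.single q 1) =
      Finsupp.single (p.1 + q.1, p.2 + q.2) 1 + Finsupp.single (p.1 + q.1, p.2 + q.2 + 1) 1 := by
    rintro ⟨n, i⟩ ⟨m, j⟩; exact hmul n i m j
  have hsmul : ∀ (r : ℕ × ℕ) (e : ℝ), Finsupp.single r e = e • Finsupp.single r (1 : ℝ) := by
    intro r e; simp [Finsupp.smul_single]
  constructor
  · intro x y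
    induction x using Finsupp.induction_linear with
    | zero => simp
    | add a b ha hb => simp [map_add, ha, hb]
    | single p c =>
      induction y using Finsupp.induction_linear with
      | zero => simp
      | add a b ha hb => simp [map_add, ha, hb]
      | single q d =>
        rw [hsmul p c, hsmul q d]
        simp only [map_smul, LinearMap.smul_apply]
        rw [key, key]
        rcases p with ⟨n, i⟩; rcases q with ⟨m, j⟩
        simp only [Nat.add_comm n m, Nat.add_comm i j]
        rw [smul_comm]
  · have core : ∀ p q r : ℕ × ℕ,
        mul (mul (Finsupp.single p 1) (Finsupp.single q 1)) (Finsupp.single r 1) =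
        mul (Finsupp.single p 1) (mul (Finsupp.single q 1) (Finsupp.single r 1)) := by
      rintro ⟨n, i⟩ ⟨m, j⟩ ⟨k, l⟩
      simp only [key, map_add, LinearMap.add_apply]
      simp only [key, Nat.add_assoc]
      abel_nf
    intro x y z
    induction x using Finsupp.induction_linear with
    | zero => simp
    | add a b ha hb => simp [map_add, ha, hb]
    | single p c =>
      induction y using Finsupp.induction_linear with
      | zero => simp
      | add a b ha hb => simp [map_add, ha, hb]
      | single q d =>
        induction z using Finsupp.induction_linear with
        | zero => simp
        | add a b ha hb => simp [map_add, ha, hb]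
        | single r e =>
          rw [hsmul p c, hsmul q d, hsmul r e]
          simp only [map_smul, LinearMap.smul_apply]
          rw [core]
end

section
/- Fix an integer l ≥ 3 and a parameter γ ∈ ℂ. For every n ≥ 0: if n + 1 ≡ 0 (mod l) (i.e. n is critical) then λ_n = c_n; otherwise λ_n = c_n + γ^{j}·c_{n−2j}, where j := (n+1) mod l. -/
/-- For `l ≥ 3`, the root-of-unity trace coefficients `λ_n` satisfy
`λ_n = c_n` if `n` is critical (`l ∣ n+1`), and
`λ_n = c_n + γ^j c_{n-2j}` with `j = (n+1) mod l` otherwise. -/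
theorem stmt_8 (l : ℕ) (hl : 3 ≤ l) (γ : ℂ)
    (c : ℤ → ℂ)
    (hcneg : ∀ m : ℤ, m < 0 → c m = 0)
    (hc0 : c 0 = 1) (hc1 : c 1 = 1)
    (hcrec : ∀ n : ℕ, c ((n : ℤ) + 2) = c ((n : ℤ) + 1) - γ * c (n : ℤ))
    (lam : ℤ → ℂ)
    (hlneg : ∀ m : ℤ, m < 0 → lam m = 0)
    (hl0 : lam 0 = 1) (hl1 : lam 1 = 1)
    (hrec0 : ∀ n : ℕ, 2 ≤ n → n % l = 0 → lam (n : ℤ) = lam ((n : ℤ) - 1))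
    (hrec1 : ∀ n : ℕ, 2 ≤ n → n % l = 1 →
      lam (n : ℤ) = lam ((n : ℤ) - 1) - 2 * γ * lam ((n : ℤ) - 2))
    (hrecl : ∀ n : ℕ, 2 ≤ n → n % l = l - 1 →
      lam (n : ℤ) = lam ((n : ℤ) - 1) - γ * lam ((n : ℤ) - 2) - γ ^ l * lam ((n : ℤ) - 2 * l))
    (hrece : ∀ n : ℕ, 2 ≤ n → n % l ≠ 0 → n % l ≠ 1 → n % l ≠ l - 1 →
      lam (n : ℤ) = lam ((n : ℤ) - 1) - γ * lam ((n : ℤ) - 2)) :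
    ∀ n : ℕ,
      ((n + 1) % l = 0 → lam (n : ℤ) = c (n : ℤ)) ∧
      ((n + 1) % l ≠ 0 →
        lam (n : ℤ) = c (n : ℤ) +
          γ ^ ((n + 1) % l) * c ((n : ℤ) - 2 * (((n + 1) % l : ℕ) : ℤ))) := by
  have hlpos : 0 < l := by omega
  have hone : 1 % l = 1 := Nat.mod_eq_of_lt (by omega)
  have hrec' : ∀ m : ℤ, m ≠ -2 → c (m + 2) = c (m + 1) - γ * c m := by
    intro m hm
    rcases lt_trichotomy m (-1) with h | h | h
    · rw [hcneg _ (by omega), hcneg _ (by omega), hcneg _ (by omega)]; ring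
    · subst h; norm_num [hc0, hc1, hcneg (-1) (by omega)]
    · obtain ⟨k, rfl⟩ : ∃ k : ℕ, m = k := ⟨m.toNat, by omega⟩
      exact hcrec k
  have hms1 : ∀ a : ℕ, a % l = l - 1 → (a + 1) % l = 0 := by
    intro a h
    rw [Nat.add_mod, h, hone, show l - 1 + 1 = l by omega, Nat.mod_self]
  have hms2 : ∀ a : ℕ, a % l ≠ l - 1 → (a + 1) % l = a % l + 1 := by
    intro a h
    have hlt := Nat.mod_lt a hlpos
    rw [Nat.add_mod, hone]
    exact Nat.mod_eq_of_lt (by omega)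
  intro n
  induction n using Nat.strong_induction_on with
  | _ n ih =>
  rcases Nat.lt_or_ge n 2 with hn | hn2
  · interval_cases n
    · constructor
      · intro h
        rw [Nat.zero_add, hone] at h
        exact absurd h one_ne_zero
      · intro _
        rw [Nat.zero_add, hone]
        push_cast
        rw [hl0, hc0, hcneg (-2) (by norm_num)]
        ring
    · have htwo : (1 + 1) % l = 2 := Nat.mod_eq_of_lt (by omega)
      constructor
      · intro h
        rw [htwo] at h
        exact absurd h two_ne_zero
      · intro _
        rw [htwo]
        push_cast
        rw [hl1, hc1, hcneg (-3) (by norm_num)]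
        ring
  · obtain ⟨m, rfl⟩ : ∃ m, n = m + 2 := ⟨n - 2, by omega⟩
    have hrlt : (m + 2) % l < l := Nat.mod_lt _ hlpos
    have IH1 := ih (m + 1) (by omega)
    have IH2 := ih m (by omega)
    by_cases h0 : (m + 2) % l = 0
    · -- r = 0 : j = 1
      have hj3 : (m + 2 + 1) % l = 1 := by
        rw [hms2 (m + 2) (by omega), h0]
      have E1 := hrec0 (m + 2) hn2 h0
      have h0' : (m + 1 + 1) % l = 0 := h0
      have E2 := IH1.1 h0'
      have E4 := hrec' (m : ℤ) (by omega)
      constructor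
      · intro h
        rw [hj3] at h
        exact absurd h one_ne_zero
      · intro _
        rw [hj3]
        push_cast at E1 E2 E4 ⊢
        ring_nf at E1 E2 E4 ⊢
        linear_combination E1 + E2 - E4
    · by_cases h1 : (m + 2) % l = 1
      · -- r = 1 : j = 2
        have hj3 : (m + 2 + 1) % l = 2 := by
          rw [hms2 (m + 2) (by omega), h1]
        have hj1 : (m + 1) % l = 0 := by
          by_cases hc : (m + 1) % l = l - 1
          · have h00 : (m + 2) % l = 0 := hms1 (m + 1) hc
            omega
          · have h' : (m + 2) % l = (m + 1) % l + 1 := hms2 (m + 1) hc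
            omega
        have hm0 : m ≠ 0 := by
          rintro rfl
          rw [Nat.mod_eq_of_lt (by omega : 0 + 2 < l)] at h1
          omega
        have E1 := hrec1 (m + 2) hn2 h1
        have h1' : (m + 1 + 1) % l = 1 := h1
        have E2 := IH1.2 (by rw [h1']; exact one_ne_zero)
        rw [h1'] at E2
        have E3 := IH2.1 hj1
        have E4 := hrec' (m : ℤ) (by omega)
        have E5 := hrec' ((m : ℤ) - 2) (by omega)
        constructor
        · intro h
          rw [hj3] at h
          exact absurd h two_ne_zero
        · intro _
          rw [hj3]
          push_cast at E1 E2 E3 E4 E5 ⊢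
          ring_nf at E1 E2 E4 E5 ⊢
          linear_combination E1 + E2 - 2*γ*E3 - E4 - γ*E5
      · by_cases hL : (m + 2) % l = l - 1
        · -- r = l - 1 : j = 0, critical
          obtain ⟨s, hls⟩ : ∃ s, l = s + 3 := ⟨l - 3, by omega⟩
          have hLZ : (l : ℤ) = (s : ℤ) + 3 := by omega
          have hj3 : (m + 2 + 1) % l = 0 := hms1 (m + 2) hL
          have hj1 : (m + 1) % l = s + 1 := by
            by_cases hc : (m + 1) % l = l - 1
            · have h00 : (m + 2) % l = 0 := hms1 (m + 1) hc
              omega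
            · have h' : (m + 2) % l = (m + 1) % l + 1 := hms2 (m + 1) hc
              omega
          have hne : (m : ℤ) - 2 * (s : ℤ) - 4 ≠ -2 := by
            intro hcon
            have hm4 : m + 2 = (s + 1) + 1 * l := by omega
            have : (m + 2) % l = s + 1 := by
              rw [hm4, Nat.add_mul_mod_self_right]
              exact Nat.mod_eq_of_lt (by omega)
            omega
          -- λ at position n - 2l equals c there
          have hC : lam ((m : ℤ) + 2 - 2 * ((s : ℤ) + 3)) = c ((m : ℤ) + 2 - 2 * ((s : ℤ) + 3)) := by
            by_cases hge : 2 * l ≤ m + 2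
            · obtain ⟨k, hk⟩ : ∃ k, m + 2 = k + 2 * l := ⟨m + 2 - 2 * l, by omega⟩
              have hkmod : (k + 1) % l = 0 := by
                have : (k + 1 + 2 * l) % l = (k + 1) % l := Nat.add_mul_mod_self_right _ _ _
                rw [show k + 1 + 2 * l = m + 2 + 1 by omega, hj3] at this
                exact this.symm
              have hE := (ih k (by omega)).1 hkmod
              have hkz : ((m : ℤ) + 2 - 2 * ((s : ℤ) + 3)) = (k : ℤ) := by omega
              rw [hkz]
              exact hE
            · rw [hlneg _ (by omega), hcneg _ (by omega)]
          have E1 := hrecl (m + 2) hn2 hL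
          have hL' : (m + 1 + 1) % l = s + 2 := hL.trans (by omega)
          have E2 := IH1.2 (by rw [hL']; exact Nat.succ_ne_zero _)
          rw [hL'] at E2
          have E3 := IH2.2 (by rw [hj1]; exact Nat.succ_ne_zero _)
          rw [hj1] at E3
          have Epow : γ ^ l = γ ^ (s + 3) := by rw [hls]
          rw [Epow] at E1
          have E4 := hrec' (m : ℤ) (by omega)
          have E5 := hrec' ((m : ℤ) - 2 * (s : ℤ) - 4) hne
          constructor
          · intro _
            push_cast at E1 E2 E3 E4 E5 hC ⊢
            rw [hLZ] at E1
            ring_nf at E1 E2 E3 E4 E5 hC ⊢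
            linear_combination E1 + E2 - γ*E3 - E4 - γ^(s+3)*hC - γ^(s+2)*E5
          · intro h
            exact absurd hj3 h
        · -- generic case : 2 ≤ r ≤ l - 2, j = r + 1
          obtain ⟨q, hq⟩ : ∃ q, (m + 2) % l = q + 2 := ⟨(m + 2) % l - 2, by omega⟩
          have hj3 : (m + 2 + 1) % l = q + 3 := by
            rw [hms2 (m + 2) hL, hq]
          have hj1 : (m + 1) % l = q + 1 := by
            by_cases hc : (m + 1) % l = l - 1
            · have h00 : (m + 2) % l = 0 := hms1 (m + 1) hc
              omega
            · have h' : (m + 2) % l = (m + 1) % l + 1 := hms2 (m + 1) hc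
              omega
          have hne : (m : ℤ) - 2 * (q : ℤ) - 4 ≠ -2 := by
            intro hcon
            have hm2 : m = 2 * q + 2 := by omega
            rcases Nat.lt_or_ge (2 * (q + 2)) l with hlt | hge
            · rw [show m + 2 = 2 * (q + 2) by omega, Nat.mod_eq_of_lt hlt] at hq
              omega
            · have : (m + 2) % l = 2 * (q + 2) - l := by
                rw [show m + 2 = 2 * (q + 2) by omega, Nat.mod_eq_sub_mod hge]
                exact Nat.mod_eq_of_lt (by omega)
              omega
          have E1 := hrece (m + 2) hn2 h0 h1 hL
          have hq' : (m + 1 + 1) % l = q + 2 := hq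
          have E2 := IH1.2 (by rw [hq']; exact Nat.succ_ne_zero _)
          rw [hq'] at E2
          have E3 := IH2.2 (by rw [hj1]; exact Nat.succ_ne_zero _)
          rw [hj1] at E3
          have E4 := hrec' (m : ℤ) (by omega)
          have E5 := hrec' ((m : ℤ) - 2 * (q : ℤ) - 4) hne
          constructor
          · intro h
            rw [hj3] at h
            exact absurd h (Nat.succ_ne_zero _)
          · intro _
            rw [hj3]
            push_cast at E1 E2 E3 E4 E5 ⊢
            ring_nf at E1 E2 E3 E4 E5 ⊢
            linear_combination E1 + E2 - γ*E3 - E4 - γ^(q+2)*E5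
end

section
/- Fix l = 2 and a parameter γ ∈ ℂ. Then for every n ≥ 0, λ_{2n+1} = c_{2n+1} and λ_{2n+2} = c_{2n+2} + γ·c_{2n}. -/
/-- For `l = 2` (the case `δ = 0`): `λ_{2n+1} = c_{2n+1}` and
`λ_{2n+2} = c_{2n+2} + γ c_{2n}` for all `n ≥ 0`. -/
theorem stmt_9 (γ : ℂ)
    (c : ℤ → ℂ)
    (hcneg : ∀ m : ℤ, m < 0 → c m = 0)
    (hc0 : c 0 = 1) (hc1 : c 1 = 1)
    (hcrec : ∀ n : ℕ, c ((n : ℤ) + 2) = c ((n : ℤ) + 1) - γ * c (n : ℤ))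
    (lam : ℤ → ℂ)
    (hlm1 : lam (-1) = 0)
    (hl1 : lam 1 = 1) (hl2 : lam 2 = 1)
    (hrec1 : ∀ n : ℕ, 1 ≤ n →
      lam (2 * (n : ℤ) + 1) =
        lam (2 * (n : ℤ)) - 2 * γ * lam (2 * (n : ℤ) - 1) - γ ^ 2 * lam (2 * (n : ℤ) - 3))
    (hrec2 : ∀ n : ℕ, 1 ≤ n → lam (2 * (n : ℤ) + 2) = lam (2 * (n : ℤ) + 1)) :
    ∀ n : ℕ,
      lam (2 * (n : ℤ) + 1) = c (2 * (n : ℤ) + 1) ∧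
      lam (2 * (n : ℤ) + 2) = c (2 * (n : ℤ) + 2) + γ * c (2 * (n : ℤ)) := by
  -- key identity for c at odd indices, valid also at n = 0 thanks to hcneg
  have hkey : ∀ n : ℕ, c (2 * (n : ℤ) + 1) = c (2 * (n : ℤ)) - γ * c (2 * (n : ℤ) - 1) := by
    intro n
    cases n with
    | zero =>
      have : c (-1 : ℤ) = 0 := hcneg (-1) (by norm_num)
      norm_num [hc0, hc1, this]
    | succ m =>
      have h := hcrec (2 * m + 1)
      push_cast at h ⊢
      have e1 : ((2 : ℤ) * m + 1) + 2 = 2 * ((m : ℤ) + 1) + 1 := by ring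
      have e2 : ((2 : ℤ) * m + 1) + 1 = 2 * ((m : ℤ) + 1) := by ring
      have e3 : ((2 : ℤ) * m + 1) = 2 * ((m : ℤ) + 1) - 1 := by ring
      rw [e1, e2, e3] at h
      exact h
  have main : ∀ n : ℕ,
      lam (2 * (n : ℤ) - 1) = c (2 * (n : ℤ) - 1) ∧
      lam (2 * (n : ℤ) + 1) = c (2 * (n : ℤ) + 1) ∧
      lam (2 * (n : ℤ) + 2) = c (2 * (n : ℤ) + 2) + γ * c (2 * (n : ℤ)) := by
    intro n
    induction n with
    | zero =>
      refine ⟨?_, ?_, ?_⟩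
      · have : c (-1 : ℤ) = 0 := hcneg (-1) (by norm_num)
        norm_num [hlm1, this]
      · norm_num [hl1, hc1]
      · have h2 := hcrec 0
        norm_num at h2 ⊢
        rw [hl2, h2, hc0, hc1]
        ring
    | succ m ih =>
      obtain ⟨ihm, ih1, ih2⟩ := ih
      have hr := hrec1 (m + 1) (by omega)
      have hr2 := hrec2 (m + 1) (by omega)
      have hk1 := hkey (m + 1)
      have hk0 := hkey m
      have hcr := hcrec (2 * m + 2)
      push_cast at hr hr2 hk1 hcr ⊢
      ring_nf at hr hr2 hk1 hcr ihm ih1 ih2 hk0 ⊢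
      refine ⟨?_, ?_, ?_⟩
      · linear_combination ih1
      · linear_combination hr + ih2 - 2 * γ * ih1 - γ ^ 2 * ihm - hk1 - γ * hk0
      · linear_combination hr2 + hr + ih2 - 2 * γ * ih1 - γ ^ 2 * ihm - hcr - γ * hk0 - hk1
  intro n
  exact ⟨(main n).2.1, (main n).2.2⟩
end

section
/- Fix an integer l ≥ 3 and let γ ∈ ℝ with 0 < γ ≤ 1/4. Then λ_n > 0 for every n ≥ 0. -/
namespace Stmt10Aux

def cseq (γ : ℝ) : ℕ → ℝ
  | 0 => 1
  | 1 => 1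
  | (n+2) => cseq γ (n+1) - γ * cseq γ n

def dseq (γ : ℝ) : ℕ → ℝ
  | 0 => 1
  | 1 => 1 - 2*γ
  | (n+2) => dseq γ (n+1) - γ * dseq γ n

def museq (γ : ℝ) (l : ℕ) : ℕ → ℝ
  | 0 => 0
  | 1 => cseq γ (l-1)
  | (m+2) => dseq γ (l-1) * museq γ l (m+1) - γ^l * museq γ l m

noncomputable def valseq (γ : ℝ) (l : ℕ) (n : ℕ) : ℝ :=
  if n < l then cseq γ n
  else if n % l = l - 1 then museq γ l (n / l + 1)
  else museq γ l (n / l) * dseq γ (n % l)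

variable {γ : ℝ} {l : ℕ}

lemma cseq_rec (n : ℕ) (hn : 2 ≤ n) : cseq γ n = cseq γ (n-1) - γ * cseq γ (n-2) := by
  obtain ⟨k, rfl⟩ : ∃ k, n = k + 2 := ⟨n - 2, by omega⟩
  simp [cseq]

lemma dseq_rec (n : ℕ) (hn : 2 ≤ n) : dseq γ n = dseq γ (n-1) - γ * dseq γ (n-2) := by
  obtain ⟨k, rfl⟩ : ∃ k, n = k + 2 := ⟨n - 2, by omega⟩
  simp [dseq]

lemma museq_rec (m : ℕ) (hm : 2 ≤ m) :
    museq γ l m = dseq γ (l-1) * museq γ l (m-1) - γ^l * museq γ l (m-2) := by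
  obtain ⟨k, rfl⟩ : ∃ k, m = k + 2 := ⟨m - 2, by omega⟩
  simp [museq]

lemma val_lt {n : ℕ} (hn : n < l) : valseq γ l n = cseq γ n := if_pos hn

lemma val_top (hl : 3 ≤ l) (m : ℕ) : valseq γ l ((l-1) + m*l) = museq γ l (m+1) := by
  cases m with
  | zero => simp only [Nat.zero_mul, Nat.add_zero]
            rw [val_lt (by omega)]
            simp [museq]
  | succ m' =>
    have hge : l ≤ (l-1) + (m'+1)*l := by
      calc l ≤ (m'+1)*l := Nat.le_mul_of_pos_left l (Nat.succ_pos m')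
      _ ≤ (l-1) + (m'+1)*l := Nat.le_add_left _ _
    rw [valseq, if_neg (by omega)]
    rw [Nat.add_mul_mod_self_right, Nat.mod_eq_of_lt (by omega),
      Nat.add_mul_div_right _ _ (by omega : 0 < l), Nat.div_eq_of_lt (by omega)]
    simp

lemma val_mid (hl : 3 ≤ l) (m j : ℕ) (hm : 1 ≤ m) (hj : j < l) (hjl : j ≠ l-1) :
    valseq γ l (j + m*l) = museq γ l m * dseq γ j := by
  have hge : l ≤ j + m*l := by
    calc l ≤ m*l := Nat.le_mul_of_pos_left l (by omega)
    _ ≤ j + m*l := Nat.le_add_left _ _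
  rw [valseq, if_neg (by omega)]
  rw [Nat.add_mul_mod_self_right, Nat.mod_eq_of_lt hj,
    Nat.add_mul_div_right _ _ (by omega : 0 < l), Nat.div_eq_of_lt hj]
  rw [if_neg hjl]
  simp

lemma cseq_pos (hγ0 : 0 < γ) (hγ4 : γ ≤ 1/4) :
    ∀ n, 0 < cseq γ n ∧ (1 - 2*γ) * cseq γ n ≤ cseq γ (n+1) := by
  intro n
  induction n with
  | zero => refine ⟨by simp [cseq], ?_⟩; simp [cseq]; nlinarith
  | succ k ih =>
    obtain ⟨h1, h2⟩ := ih
    have hpos : 0 < cseq γ (k+1) := lt_of_lt_of_le (by nlinarith) h2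
    refine ⟨hpos, ?_⟩
    show (1 - 2*γ) * cseq γ (k+1) ≤ cseq γ (k+1) - γ * cseq γ k
    nlinarith [mul_le_mul_of_nonneg_left h2 hγ0.le, mul_pos hγ0 h1]

lemma dseq_pos (hγ0 : 0 < γ) (hγ4 : γ ≤ 1/4) :
    ∀ n, 0 < dseq γ n ∧ (1 - 2*γ) * dseq γ n ≤ dseq γ (n+1) := by
  intro n
  induction n with
  | zero => refine ⟨by simp [dseq], ?_⟩; simp [dseq]
  | succ k ih =>
    obtain ⟨h1, h2⟩ := ih
    have hpos : 0 < dseq γ (k+1) := lt_of_lt_of_le (by nlinarith) h2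
    refine ⟨hpos, ?_⟩
    show (1 - 2*γ) * dseq γ (k+1) ≤ dseq γ (k+1) - γ * dseq γ k
    nlinarith [mul_le_mul_of_nonneg_left h2 hγ0.le, mul_pos hγ0 h1]

lemma dseq_ge (hγ0 : 0 < γ) (hγ4 : γ ≤ 1/4) : ∀ n, (1 - 2*γ)^n ≤ dseq γ n := by
  intro n
  induction n with
  | zero => simp [dseq]
  | succ k ih =>
    have h := (dseq_pos hγ0 hγ4 k).2
    calc (1-2*γ)^(k+1) = (1-2*γ) * (1-2*γ)^k := by ring
    _ ≤ (1-2*γ) * dseq γ k := by nlinarith [pow_nonneg (by nlinarith : (0:ℝ) ≤ 1-2*γ) k]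
    _ ≤ dseq γ (k+1) := h

lemma key_disc (hl : 3 ≤ l) (hγ0 : 0 < γ) (hγ4 : γ ≤ 1/4) :
    4 * γ^l ≤ (dseq γ (l-1))^2 := by
  have hr : (0:ℝ) ≤ 1 - 2*γ := by nlinarith
  have h1 : (1 - 2*γ)^(l-1) ≤ dseq γ (l-1) := dseq_ge hγ0 hγ4 (l-1)
  have h1' : (0:ℝ) ≤ (1-2*γ)^(l-1) := pow_nonneg hr _
  have hsq : ((1-2*γ)^(l-1))^2 ≤ (dseq γ (l-1))^2 := by nlinarith
  have h2 : γ^(l-1) ≤ ((1-2*γ)^2)^(l-1) :=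
    pow_le_pow_left₀ hγ0.le (by nlinarith) _
  have h3 : ((1-2*γ)^2)^(l-1) = ((1-2*γ)^(l-1))^2 := by
    rw [← pow_mul, ← pow_mul, Nat.mul_comm]
  have h4 : γ^l = γ * γ^(l-1) := by
    rw [← pow_succ']
    congr 1
    omega
  nlinarith [pow_nonneg hγ0.le (l-1)]

lemma museq_pos (hl : 3 ≤ l) (hγ0 : 0 < γ) (hγ4 : γ ≤ 1/4) :
    ∀ m, 0 < museq γ l (m+1) ∧
      dseq γ (l-1) / 2 * museq γ l (m+1) ≤ museq γ l (m+2) := by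
  have hK : 0 < dseq γ (l-1) := (dseq_pos hγ0 hγ4 (l-1)).1
  have hKsq := key_disc hl hγ0 hγ4
  have hg : (0:ℝ) < γ^l := pow_pos hγ0 l
  intro m
  induction m with
  | zero =>
    have hc : 0 < cseq γ (l-1) := (cseq_pos hγ0 hγ4 (l-1)).1
    refine ⟨by simpa [museq] using hc, ?_⟩
    show dseq γ (l-1) / 2 * museq γ l 1 ≤ dseq γ (l-1) * museq γ l 1 - γ^l * museq γ l 0
    simp only [museq]
    nlinarith
  | succ k ih =>
    obtain ⟨h1, h2⟩ := ih
    have hpos : 0 < museq γ l (k+2) := lt_of_lt_of_le (by positivity) h2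
    refine ⟨hpos, ?_⟩
    show dseq γ (l-1) / 2 * museq γ l (k+2) ≤
      dseq γ (l-1) * museq γ l (k+2) - γ^l * museq γ l (k+1)
    nlinarith [mul_le_mul_of_nonneg_left h2 hg.le,
      mul_nonneg (sub_nonneg.2 hKsq) hpos.le]

end Stmt10Aux

open Stmt10Aux in
/-- For `l ≥ 3` and `0 < γ ≤ 1/4`, all the root-of-unity trace coefficients
`λ_n` are positive. -/
theorem stmt_10 (l : ℕ) (hl : 3 ≤ l) (γ : ℝ) (hγ0 : 0 < γ) (hγ4 : γ ≤ 1 / 4)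
    (lam : ℤ → ℝ)
    (hlneg : ∀ m : ℤ, m < 0 → lam m = 0)
    (hl0 : lam 0 = 1) (hl1 : lam 1 = 1)
    (hrec0 : ∀ n : ℕ, 2 ≤ n → n % l = 0 → lam (n : ℤ) = lam ((n : ℤ) - 1))
    (hrec1 : ∀ n : ℕ, 2 ≤ n → n % l = 1 →
      lam (n : ℤ) = lam ((n : ℤ) - 1) - 2 * γ * lam ((n : ℤ) - 2))
    (hrecl : ∀ n : ℕ, 2 ≤ n → n % l = l - 1 →
      lam (n : ℤ) = lam ((n : ℤ) - 1) - γ * lam ((n : ℤ) - 2) - γ ^ l * lam ((n : ℤ) - 2 * l))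
    (hrece : ∀ n : ℕ, 2 ≤ n → n % l ≠ 0 → n % l ≠ 1 → n % l ≠ l - 1 →
      lam (n : ℤ) = lam ((n : ℤ) - 1) - γ * lam ((n : ℤ) - 2)) :
    ∀ n : ℕ, 0 < lam (n : ℤ) := by
  have hγ4' : γ ≤ 1/4 := hγ4
  have key : ∀ n : ℕ, lam (n : ℤ) = valseq γ l n := by
    intro n
    induction n using Nat.strong_induction_on with
    | _ n ih =>
    match n, ih with
    | 0, _ => rw [val_lt (by omega), show ((0:ℕ):ℤ) = 0 from rfl, hl0]; simp [cseq]
    | 1, _ => rw [val_lt (by omega), show ((1:ℕ):ℤ) = 1 from rfl, hl1]; simp [cseq]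
    | (k+2), ih =>
      set n := k + 2 with hn
      have hn2 : 2 ≤ n := by omega
      have e1 : (n:ℤ) - 1 = ((n-1 : ℕ) : ℤ) := by omega
      have e2 : (n:ℤ) - 2 = ((n-2 : ℕ) : ℤ) := by omega
      by_cases hnl : n < l
      · -- first block: value is cseq
        have hmod : n % l = n := Nat.mod_eq_of_lt hnl
        by_cases hne : n = l - 1
        · have h := hrecl n hn2 (by omega)
          have ezero : lam ((n:ℤ) - 2*l) = 0 := hlneg _ (by omega)
          rw [e1, e2, ezero, ih (n-1) (by omega), ih (n-2) (by omega)] at h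
          rw [h, val_lt hnl, val_lt (by omega), val_lt (by omega),
            cseq_rec n hn2]
          ring
        · have h := hrece n hn2 (by omega) (by omega) (by omega)
          rw [e1, e2, ih (n-1) (by omega), ih (n-2) (by omega)] at h
          rw [h, val_lt hnl, val_lt (by omega), val_lt (by omega),
            cseq_rec n hn2]
      · -- n ≥ l
        push_neg at hnl
        obtain ⟨m, j, hj, hm, hsplit⟩ :
            ∃ m j, j < l ∧ 1 ≤ m ∧ j + m * l = n := by
          refine ⟨n / l, n % l, Nat.mod_lt _ (by omega), ?_, Nat.mod_add_div' n l⟩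
          exact (Nat.one_le_div_iff (by omega)).2 hnl
        obtain ⟨m', rfl⟩ : ∃ m', m = m' + 1 := ⟨m - 1, by omega⟩
        have hexp : (m'+1) * l = m' * l + l := Nat.succ_mul m' l
        rw [hexp] at hsplit
        have hmod : n % l = j := by
          rw [← hsplit, ← hexp, Nat.add_mul_mod_self_right, Nat.mod_eq_of_lt hj]
        by_cases hj0 : j = 0
        · -- n = m*l
          have h := hrec0 n hn2 (by omega)
          have hn1 : n - 1 = (l-1) + m' * l := by
            generalize m' * l = A at hsplit ⊢; omega
          rw [e1, ih (n-1) (by omega), hn1, val_top hl m'] at h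
          rw [h, ← hsplit, hj0, ← hexp,
            val_mid hl (m'+1) 0 (by omega) (by omega) (by omega)]
          simp [dseq]
        · by_cases hj1 : j = 1
          · -- n = m*l + 1
            have h := hrec1 n hn2 (by omega)
            have hn1 : n - 1 = 0 + (m'+1) * l := by
              rw [hexp]; generalize m' * l = A at hsplit ⊢; omega
            have hn2' : n - 2 = (l-1) + m' * l := by
              generalize m' * l = A at hsplit ⊢; omega
            rw [e1, e2, ih (n-1) (by omega), ih (n-2) (by omega),
              hn1, hn2', val_top hl m',
              val_mid hl (m'+1) 0 (by omega) (by omega) (by omega)] at h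
            rw [h, ← hsplit, hj1, ← hexp,
              val_mid hl (m'+1) 1 (by omega) (by omega) (by omega)]
            simp [dseq]
            ring
          · by_cases hjl : j = l - 1
            · -- n = m*l + (l-1)
              have h := hrecl n hn2 (by omega)
              have hn1 : n - 1 = (l-2) + (m'+1) * l := by
                rw [hexp]; generalize m' * l = A at hsplit ⊢; omega
              have hn2' : n - 2 = (l-3) + (m'+1) * l := by
                rw [hexp]; generalize m' * l = A at hsplit ⊢; omega
              rw [e1, e2, ih (n-1) (by omega), ih (n-2) (by omega),
                hn1, hn2',
                val_mid hl (m'+1) (l-2) (by omega) (by omega) (by omega),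
                val_mid hl (m'+1) (l-3) (by omega) (by omega) (by omega)] at h
              have hval : valseq γ l n = museq γ l (m'+2) := by
                rw [← hsplit, ← hexp, hjl, val_top hl (m'+1)]
              have hd : dseq γ (l-1) = dseq γ (l-2) - γ * dseq γ (l-3) := by
                have := dseq_rec (γ := γ) (l-1) (by omega)
                rw [show l - 1 - 1 = l - 2 by omega, show l - 1 - 2 = l - 3 by omega] at this
                exact this
              by_cases hm1 : m' = 0
              · subst hm1
                have ezero : lam ((n:ℤ) - 2*l) = 0 := by
                  apply hlneg
                  have : n = l - 1 + l := by
                    generalize 0 * l = A at hsplit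
                    omega
                  omega
                rw [ezero] at h
                rw [h, hval]
                have h2 : museq γ l (0+2) =
                    dseq γ (l-1) * museq γ l (0+1) - γ^l * museq γ l 0 := by
                  simp [museq]
                rw [h2, hd]
                simp only [museq]
                ring
              · obtain ⟨m'', rfl⟩ : ∃ m'', m' = m'' + 1 := ⟨m' - 1, by omega⟩
                have hge : l - 1 + (m''*l + l + l) = n := by
                  have : (m''+1) * l = m'' * l + l := Nat.succ_mul m'' l
                  rw [this] at hsplit
                  generalize m'' * l = A at hsplit ⊢; omega
                have e3 : (n:ℤ) - 2*l = ((n - 2*l : ℕ) : ℤ) := by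
                  generalize m''*l = A at hge; omega
                have hn3 : n - 2*l = (l-1) + m'' * l := by
                  generalize hA : m''*l = A at hge ⊢; omega
                rw [e3, ih (n - 2*l) (by generalize m''*l = A at hge; omega),
                  hn3, val_top hl m''] at h
                rw [h, hval]
                have h2 : museq γ l (m''+1+2) =
                    dseq γ (l-1) * museq γ l (m''+2) - γ^l * museq γ l (m''+1) := by
                  simp [museq]
                rw [h2, hd]
                ring
            · -- generic j, 2 ≤ j ≤ l-2
              have h := hrece n hn2 (by omega) (by omega) (by omega)
              have hj2 : 2 ≤ j := by omega
              have hn1 : n - 1 = (j-1) + (m'+1) * l := by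
                rw [hexp]; generalize m' * l = A at hsplit ⊢; omega
              have hn2' : n - 2 = (j-2) + (m'+1) * l := by
                rw [hexp]; generalize m' * l = A at hsplit ⊢; omega
              rw [e1, e2, ih (n-1) (by omega), ih (n-2) (by omega),
                hn1, hn2',
                val_mid hl (m'+1) (j-1) (by omega) (by omega) (by omega),
                val_mid hl (m'+1) (j-2) (by omega) (by omega) (by omega)] at h
              rw [h, ← hsplit, ← hexp,
                val_mid hl (m'+1) j (by omega) (by omega) (by omega),
                dseq_rec j hj2]
              ring
  intro n
  rw [key n]
  by_cases hnl : n < l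
  · rw [val_lt hnl]
    exact (cseq_pos hγ0 hγ4' n).1
  · push_neg at hnl
    obtain ⟨m, j, hj, hm, hsplit⟩ :
        ∃ m j, j < l ∧ 1 ≤ m ∧ j + m * l = n := by
      refine ⟨n / l, n % l, Nat.mod_lt _ (by omega), ?_, Nat.mod_add_div' n l⟩
      exact (Nat.one_le_div_iff (by omega)).2 hnl
    obtain ⟨m', rfl⟩ : ∃ m', m = m' + 1 := ⟨m - 1, by omega⟩
    by_cases hjl : j = l - 1
    · rw [← hsplit, hjl, val_top hl (m'+1)]
      exact (museq_pos hl hγ0 hγ4' (m'+1)).1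
    · rw [← hsplit, val_mid hl (m'+1) j (by omega) hj hjl]
      exact mul_pos (museq_pos hl hγ0 hγ4' m').1 (dseq_pos hγ0 hγ4' j).1
end

section
/- Fix l = 2 and let γ ∈ ℝ with 0 < γ ≤ 1/4. Then λ_n > 0 for every n ≥ 1. -/
/-- For `l = 2` (the case `δ = 0`) and `0 < γ ≤ 1/4`, the root-of-unity trace
coefficients `λ_n` are positive for all `n ≥ 1`. -/
theorem stmt_11 (γ : ℝ) (hγ0 : 0 < γ) (hγ4 : γ ≤ 1 / 4)
    (lam : ℤ → ℝ)
    (hlm1 : lam (-1) = 0)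
    (hl1 : lam 1 = 1) (hl2 : lam 2 = 1)
    (hrec1 : ∀ n : ℕ, 1 ≤ n →
      lam (2 * (n : ℤ) + 1) =
        lam (2 * (n : ℤ)) - 2 * γ * lam (2 * (n : ℤ) - 1) - γ ^ 2 * lam (2 * (n : ℤ) - 3))
    (hrec2 : ∀ n : ℕ, 1 ≤ n → lam (2 * (n : ℤ) + 2) = lam (2 * (n : ℤ) + 1)) :
    ∀ n : ℕ, 1 ≤ n → 0 < lam (n : ℤ) := by
  have key : ∀ n : ℕ, 0 < lam (2 * (n : ℤ) + 1) ∧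
      γ * lam (2 * (n : ℤ) + 1) ≤ lam (2 * (n : ℤ) + 3) := by
    intro n
    induction n with
    | zero =>
      have h1 := hrec1 1 le_rfl
      norm_num at h1 ⊢
      rw [hl1, hl2, hlm1] at h1
      constructor
      · linarith
      · rw [hl1, h1]; linarith
    | succ n ih =>
      obtain ⟨hpos, hle⟩ := ih
      have hpos' : 0 < lam (2 * (n : ℤ) + 3) :=
        lt_of_lt_of_le (mul_pos hγ0 hpos) hle
      have h1 := hrec1 (n + 2) (by omega)
      have h2 := hrec2 (n + 1) (by omega)
      push_cast at h1 h2
      have e1 : 2 * ((n : ℤ) + 2) + 1 = 2 * (n : ℤ) + 5 := by ring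
      have e3 : 2 * ((n : ℤ) + 2) - 1 = 2 * (n : ℤ) + 3 := by ring
      have e4 : 2 * ((n : ℤ) + 2) - 3 = 2 * (n : ℤ) + 1 := by ring
      have e2 : 2 * ((n : ℤ) + 2) = 2 * (n : ℤ) + 4 := by ring
      have e5 : 2 * ((n : ℤ) + 1) + 2 = 2 * (n : ℤ) + 4 := by ring
      have e6 : 2 * ((n : ℤ) + 1) + 1 = 2 * (n : ℤ) + 3 := by ring
      rw [e1, e3, e4, e2] at h1
      rw [e5, e6] at h2
      have e7 : 2 * (((n : ℤ)) + 1) + 1 = 2 * (n : ℤ) + 3 := by ring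
      have e8 : 2 * (((n : ℤ)) + 1) + 3 = 2 * (n : ℤ) + 5 := by ring
      push_cast
      rw [e7, e8]
      refine ⟨hpos', ?_⟩
      rw [h1, h2]
      nlinarith [mul_pos hγ0 hpos, mul_le_mul_of_nonneg_left hle (by linarith : (0:ℝ) ≤ 1 - 3 * γ)]
  intro m hm
  rcases Nat.even_or_odd m with ⟨k, hk⟩ | ⟨k, hk⟩
  · -- m = 2k, k ≥ 1
    obtain ⟨j, rfl⟩ : ∃ j, k = j + 1 := ⟨k - 1, by omega⟩
    rcases Nat.eq_zero_or_pos j with rfl | hj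
    · have : (m : ℤ) = 2 := by omega
      rw [this, hl2]; norm_num
    · have h2 := hrec2 j hj
      have hme : (m : ℤ) = 2 * (j : ℤ) + 2 := by push_cast [hk]; ring
      rw [hme, h2]
      exact (key j).1
  · have hme : (m : ℤ) = 2 * (k : ℤ) + 1 := by push_cast [hk]; ring
    rw [hme]
    exact (key k).1
end

section
/- Fix integers l ≥ 3 and k ≥ 2, and let γ = 1/(4·cos²(π/(kl))). Then λ_i > 0 for all 0 ≤ i < kl − 1, and λ_{kl−1} = 0. -/
private lemma tri12 (θ x a b : ℝ) (ha : a = x + θ) (hb : b = x - θ) :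
    Real.sin a + Real.sin b = 2 * Real.cos θ * Real.sin x := by
  subst ha; subst hb; rw [Real.sin_add, Real.sin_sub]; ring

/-- For `l ≥ 3`, `k ≥ 2` and `γ = 1/(4 cos²(π/(kl)))`: `λ_i > 0` for
`0 ≤ i < kl - 1` and `λ_{kl-1} = 0`. -/
theorem stmt_12 (l k : ℕ) (hl : 3 ≤ l) (hk : 2 ≤ k)
    (γ : ℝ) (hγ : γ = 1 / (4 * Real.cos (Real.pi / (k * l)) ^ 2))
    (lam : ℤ → ℝ)
    (hlneg : ∀ m : ℤ, m < 0 → lam m = 0)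
    (hl0 : lam 0 = 1) (hl1 : lam 1 = 1)
    (hrec0 : ∀ n : ℕ, 2 ≤ n → n % l = 0 → lam (n : ℤ) = lam ((n : ℤ) - 1))
    (hrec1 : ∀ n : ℕ, 2 ≤ n → n % l = 1 →
      lam (n : ℤ) = lam ((n : ℤ) - 1) - 2 * γ * lam ((n : ℤ) - 2))
    (hrecl : ∀ n : ℕ, 2 ≤ n → n % l = l - 1 →
      lam (n : ℤ) = lam ((n : ℤ) - 1) - γ * lam ((n : ℤ) - 2) - γ ^ l * lam ((n : ℤ) - 2 * l))
    (hrece : ∀ n : ℕ, 2 ≤ n → n % l ≠ 0 → n % l ≠ 1 → n % l ≠ l - 1 →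
      lam (n : ℤ) = lam ((n : ℤ) - 1) - γ * lam ((n : ℤ) - 2)) :
    (∀ i : ℕ, i < k * l - 1 → 0 < lam (i : ℤ)) ∧ lam ((k * l : ℕ) - 1 : ℤ) = 0 := by
  have hkl6 : 6 ≤ k * l := le_trans (by norm_num) (Nat.mul_le_mul hk hl)
  set θ : ℝ := Real.pi / ((k : ℝ) * l) with hθdef
  have hklR : (6:ℝ) ≤ (k:ℝ) * l := by exact_mod_cast hkl6
  have hklRpos : (0:ℝ) < (k:ℝ) * l := by linarith
  have hθpos : 0 < θ := div_pos Real.pi_pos hklRpos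
  have hθlt : θ < Real.pi / 2 := by
    rw [hθdef, div_lt_div_iff₀ hklRpos (by norm_num)]
    nlinarith [Real.pi_pos]
  have hc : 0 < Real.cos θ := Real.cos_pos_of_mem_Ioo ⟨by linarith, hθlt⟩
  have hs : 0 < Real.sin θ := Real.sin_pos_of_pos_of_lt_pi hθpos
    (by nlinarith [Real.pi_pos])
  have hπ : ((k:ℝ) * l) * θ = Real.pi := by
    rw [hθdef]; field_simp
  have hγ2 : γ * (2 * Real.cos θ) ^ 2 = 1 := by
    rw [hγ]; rw [hθdef] at *; field_simp; ring
  have hγl : γ ^ l * (2 * Real.cos θ) ^ (2 * l) = 1 := by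
    rw [pow_mul, ← mul_pow, hγ2, one_pow]
  -- the closed form
  have key : ∀ n m j : ℕ, j < l → n = m * l + j →
      Real.sin θ * (2 * Real.cos θ) ^ n * lam (n : ℤ) =
        Real.sin (((n:ℝ) + 1) * θ) +
        (if j + 1 = l ∨ m = 0 then 0
         else Real.sin (((m:ℝ) * l - j - 1) * θ)) := by
    intro n
    induction n using Nat.strong_induction_on with
    | _ n IH =>
      intro m j hj hn
      rcases j with _ | _ | j
      · -- j = 0
        rcases m with _ | m
        · -- n = 0
          have hn0 : n = 0 := by simpa using hn
          subst hn0
          rw [if_pos (Or.inr rfl)]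
          simp [hl0]
        · -- n = (m+1)*l, m' = m
          have hd0 : n = m * l + l := by rw [hn]; ring
          have h2 : 2 ≤ n := by omega
          have hmod : n % l = 0 := by rw [hn, add_zero, Nat.mul_mod_left]
          have e := hrec0 n h2 hmod
          rw [show ((n:ℤ) - 1) = ((n - 1 : ℕ) : ℤ) by omega] at e
          have hd1 : n - 1 = m * l + (l - 1) := by omega
          have ih1 := IH (n-1) (by omega) m (l-1) (by omega) hd1
          rw [if_pos (Or.inl (by omega))] at ih1
          rw [show ((↑(n-1) : ℝ) + 1) = (n:ℝ) by rw [Nat.cast_sub (by omega : 1 ≤ n)]; ring] at ih1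
          rw [e, show (2*Real.cos θ)^n = (2*Real.cos θ)^(n-1) * (2*Real.cos θ) by
                rw [← pow_succ]; congr 1; omega]
          rw [if_neg (by omega)]
          rw [show ((n:ℝ)+1)*θ = (n:ℝ)*θ + θ by ring,
              show ((↑(m+1):ℝ)*↑l - ((0:ℕ):ℝ) - 1)*θ = (n:ℝ)*θ - θ by push_cast [hd0]; ring]
          linear_combination (2*Real.cos θ) * ih1
            - tri12 θ ((n:ℝ)*θ) ((n:ℝ)*θ + θ) ((n:ℝ)*θ - θ) rfl rfl
      · -- j = 1
        rcases m with _ | m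
        · -- n = 1
          have hn1 : n = 1 := by simpa using hn
          subst hn1
          rw [if_pos (Or.inr rfl)]
          rw [Nat.cast_one, hl1]
          rw [show ((↑(1:ℕ):ℝ) + 1) * θ = 2*θ by push_cast; ring, Real.sin_two_mul]
          ring
        · -- n = (m+1)*l + 1
          have hd0 : n = m * l + l + 1 := by rw [hn]; ring
          have h2 : 2 ≤ n := by omega
          have hmod : n % l = 1 := by
            rw [hn, Nat.mul_add_mod', Nat.mod_eq_of_lt (by omega)]
          have e := hrec1 n h2 hmod
          rw [show ((n:ℤ) - 1) = ((n - 1 : ℕ) : ℤ) by omega,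
              show ((n:ℤ) - 2) = ((n - 2 : ℕ) : ℤ) by omega] at e
          have hd1 : n - 1 = (m+1) * l + 0 := by rw [Nat.add_mul, one_mul]; omega
          have hd2 : n - 2 = m * l + (l - 1) := by omega
          have ih1 := IH (n-1) (by omega) (m+1) 0 (by omega) hd1
          have ih2 := IH (n-2) (by omega) m (l-1) (by omega) hd2
          rw [if_neg (by omega)] at ih1
          rw [if_pos (Or.inl (by omega))] at ih2
          rw [show ((↑(n-1) : ℝ) + 1) = (n:ℝ) by rw [Nat.cast_sub (by omega : 1 ≤ n)]; ring,
              show ((↑(m+1):ℝ)*↑l - ((0:ℕ):ℝ) - 1)*θ = (n:ℝ)*θ - 2*θ by push_cast [hd0]; ring] at ih1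
          rw [show ((↑(n-2) : ℝ) + 1) * θ = (n:ℝ)*θ - θ by
                rw [Nat.cast_sub (by omega : 2 ≤ n)]; push_cast; ring] at ih2
          rw [e, show (2*Real.cos θ)^n = (2*Real.cos θ)^(n-2) * (2*Real.cos θ)^2 by
                rw [← pow_add]; congr 1; omega]
          rw [show (2*Real.cos θ)^(n-1) = (2*Real.cos θ)^(n-2) * (2*Real.cos θ) by
                rw [← pow_succ]; congr 1; omega] at ih1
          rw [if_neg (by omega)]
          rw [show ((n:ℝ)+1)*θ = (n:ℝ)*θ + θ by ring,
              show ((↑(m+1):ℝ)*↑l - ((1:ℕ):ℝ) - 1)*θ = (n:ℝ)*θ - 3*θ by push_cast [hd0]; ring]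
          linear_combination (2*Real.cos θ) * ih1 - 2 * ih2
            - (2 * (Real.sin θ * (2*Real.cos θ)^(n-2) * lam ((n-2 : ℕ) : ℤ))) * hγ2
            - tri12 θ ((n:ℝ)*θ) ((n:ℝ)*θ + θ) ((n:ℝ)*θ - θ) rfl rfl
            - tri12 θ ((n:ℝ)*θ - 2*θ) ((n:ℝ)*θ - θ) ((n:ℝ)*θ - 3*θ) (by ring) (by ring)
      · -- j' + 2
        by_cases hjl : j + 2 + 1 = l
        · -- j + 2 = l - 1 : the special case
          have hd0 : n = m * l + j + 2 := by omega
          have h2 : 2 ≤ n := by omega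
          have hmod' : n % l = j + 2 := by
            rw [hn, Nat.mul_add_mod', Nat.mod_eq_of_lt (by omega)]
          have hmod : n % l = l - 1 := by omega
          have e := hrecl n h2 hmod
          rw [show ((n:ℤ) - 1) = ((n - 1 : ℕ) : ℤ) by omega,
              show ((n:ℤ) - 2) = ((n - 2 : ℕ) : ℤ) by omega] at e
          have hd1 : n - 1 = m * l + (j + 1) := by omega
          have hd2 : n - 2 = m * l + j := by omega
          have ih1 := IH (n-1) (by omega) m (j+1) (by omega) hd1
          have ih2 := IH (n-2) (by omega) m j (by omega) hd2
          rw [show ((↑(n-1) : ℝ) + 1) * θ = (n:ℝ)*θ by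
                rw [Nat.cast_sub (by omega : 1 ≤ n)]; ring] at ih1
          rw [show ((↑(n-2) : ℝ) + 1) * θ = (n:ℝ)*θ - θ by
                rw [Nat.cast_sub (by omega : 2 ≤ n)]; push_cast; ring] at ih2
          rw [if_pos (Or.inl (by omega)), show ((n:ℝ)+1)*θ = (n:ℝ)*θ + θ by ring]
          rcases Nat.eq_zero_or_pos m with hm | hm
          · -- m = 0
            subst hm
            rw [if_pos (Or.inr rfl)] at ih1 ih2
            rw [hlneg ((n:ℤ) - 2*↑l) (by omega)] at e
            rw [e, show (2*Real.cos θ)^n = (2*Real.cos θ)^(n-2) * (2*Real.cos θ)^2 by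
                  rw [← pow_add]; congr 1; omega]
            rw [show (2*Real.cos θ)^(n-1) = (2*Real.cos θ)^(n-2) * (2*Real.cos θ) by
                  rw [← pow_succ]; congr 1; omega] at ih1
            linear_combination (2*Real.cos θ) * ih1 - ih2
              - (Real.sin θ * (2*Real.cos θ)^(n-2) * lam ((n-2 : ℕ) : ℤ)) * hγ2
              - tri12 θ ((n:ℝ)*θ) ((n:ℝ)*θ + θ) ((n:ℝ)*θ - θ) rfl rfl
          · -- m ≥ 1
            rw [if_neg (by omega)] at ih1 ih2
            rw [show ((m:ℝ)*↑l - (↑(j+1):ℝ) - 1)*θ = ((n:ℝ) - 2*↑l + 2)*θ by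
                  push_cast [hd0, ← hjl]; ring] at ih1
            rw [show ((m:ℝ)*↑l - (↑j:ℝ) - 1)*θ = ((n:ℝ) - 2*↑l + 2)*θ + θ by
                  push_cast [hd0, ← hjl]; ring] at ih2
            have hC : Real.sin θ * (2*Real.cos θ)^n * (γ^l * lam ((n:ℤ) - 2*↑l)) =
                Real.sin (((n:ℝ) - 2*↑l + 2)*θ - θ) := by
              rcases (by omega : m = 1 ∨ 2 ≤ m) with hm1 | hm2
              · subst hm1
                rw [hlneg ((n:ℤ) - 2*↑l) (by omega), mul_zero, mul_zero,
                    show ((n:ℝ) - 2*↑l + 2)*θ - θ = 0 by push_cast [hd0, ← hjl]; ring,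
                    Real.sin_zero]
              · have hexp : (m-2) * l + 2 * l = m * l := by
                  calc (m-2)*l + 2*l = (m-2+2)*l := by ring
                  _ = m*l := by rw [Nat.sub_add_cancel (by omega)]
                have hd3 : n - 2*l = (m-2) * l + (j + 2) := by omega
                have ih3 := IH (n - 2*l) (by omega) (m-2) (j+2) (by omega) hd3
                rw [if_pos (Or.inl (by omega))] at ih3
                rw [show ((↑(n-2*l) : ℝ) + 1) * θ = ((n:ℝ) - 2*↑l + 2)*θ - θ by
                      rw [Nat.cast_sub (by omega : 2*l ≤ n)]; push_cast; ring] at ih3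
                rw [show ((n:ℤ) - 2*↑l) = ((n - 2*l : ℕ) : ℤ) by omega,
                    show (2*Real.cos θ)^n = (2*Real.cos θ)^(n-2*l) * (2*Real.cos θ)^(2*l) by
                      rw [← pow_add]; congr 1; omega]
                linear_combination (γ^l * (2*Real.cos θ)^(2*l)) * ih3
                  + (Real.sin (((n:ℝ) - 2*↑l + 2)*θ - θ)) * hγl
            have hA : Real.sin θ * (2*Real.cos θ)^n * lam ((n-1:ℕ):ℤ) =
                2*Real.cos θ * (Real.sin ((n:ℝ)*θ) + Real.sin (((n:ℝ) - 2*↑l + 2)*θ)) := by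
              rw [show (2*Real.cos θ)^n = (2*Real.cos θ)^(n-1) * (2*Real.cos θ) by
                    rw [← pow_succ]; congr 1; omega]
              linear_combination (2*Real.cos θ) * ih1
            have hB : Real.sin θ * (2*Real.cos θ)^n * (γ * lam ((n-2:ℕ):ℤ)) =
                Real.sin ((n:ℝ)*θ - θ) + Real.sin (((n:ℝ) - 2*↑l + 2)*θ + θ) := by
              rw [show (2*Real.cos θ)^n = (2*Real.cos θ)^(n-2) * (2*Real.cos θ)^2 by
                    rw [← pow_add]; congr 1; omega]
              linear_combination (γ * (2*Real.cos θ)^2) * ih2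
                + (Real.sin ((n:ℝ)*θ - θ) + Real.sin (((n:ℝ) - 2*↑l + 2)*θ + θ)) * hγ2
            rw [e]
            linear_combination hA - hB - hC
              - tri12 θ ((n:ℝ)*θ) ((n:ℝ)*θ + θ) ((n:ℝ)*θ - θ) rfl rfl
              - tri12 θ (((n:ℝ) - 2*↑l + 2)*θ) (((n:ℝ) - 2*↑l + 2)*θ + θ)
                  (((n:ℝ) - 2*↑l + 2)*θ - θ) rfl rfl
        · -- generic case 2 ≤ j+2 ≤ l - 2
          have hd0 : n = m * l + j + 2 := by omega
          have h2 : 2 ≤ n := by omega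
          have hmod : n % l = j + 2 := by
            rw [hn, Nat.mul_add_mod', Nat.mod_eq_of_lt (by omega)]
          have e := hrece n h2 (by omega) (by omega) (by omega)
          rw [show ((n:ℤ) - 1) = ((n - 1 : ℕ) : ℤ) by omega,
              show ((n:ℤ) - 2) = ((n - 2 : ℕ) : ℤ) by omega] at e
          have hd1 : n - 1 = m * l + (j + 1) := by omega
          have hd2 : n - 2 = m * l + j := by omega
          have ih1 := IH (n-1) (by omega) m (j+1) (by omega) hd1
          have ih2 := IH (n-2) (by omega) m j (by omega) hd2
          rw [show ((↑(n-1) : ℝ) + 1) * θ = (n:ℝ)*θ by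
                rw [Nat.cast_sub (by omega : 1 ≤ n)]; ring] at ih1
          rw [show ((↑(n-2) : ℝ) + 1) * θ = (n:ℝ)*θ - θ by
                rw [Nat.cast_sub (by omega : 2 ≤ n)]; push_cast; ring] at ih2
          rw [e, show (2*Real.cos θ)^n = (2*Real.cos θ)^(n-2) * (2*Real.cos θ)^2 by
                rw [← pow_add]; congr 1; omega]
          rw [show (2*Real.cos θ)^(n-1) = (2*Real.cos θ)^(n-2) * (2*Real.cos θ) by
                rw [← pow_succ]; congr 1; omega] at ih1
          rw [show ((n:ℝ)+1)*θ = (n:ℝ)*θ + θ by ring]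
          rcases Nat.eq_zero_or_pos m with hm | hm
          · subst hm
            rw [if_pos (Or.inr rfl)] at ih1 ih2 ⊢
            linear_combination (2*Real.cos θ) * ih1 - ih2
              - (Real.sin θ * (2*Real.cos θ)^(n-2) * lam ((n-2 : ℕ) : ℤ)) * hγ2
              - tri12 θ ((n:ℝ)*θ) ((n:ℝ)*θ + θ) ((n:ℝ)*θ - θ) rfl rfl
          · rw [if_neg (by omega)] at ih1 ih2 ⊢
            rw [show ((m:ℝ)*↑l - (↑(j+1):ℝ) - 1)*θ = ((m:ℝ)*↑l - (j:ℝ) - 2)*θ by push_cast; ring] at ih1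
            rw [show ((m:ℝ)*↑l - (j:ℝ) - 1)*θ = ((m:ℝ)*↑l - (j:ℝ) - 2)*θ + θ by ring] at ih2
            rw [show ((m:ℝ)*↑l - (↑(j+2):ℝ) - 1)*θ = ((m:ℝ)*↑l - (j:ℝ) - 2)*θ - θ by push_cast; ring]
            linear_combination (2*Real.cos θ) * ih1 - ih2
              - (Real.sin θ * (2*Real.cos θ)^(n-2) * lam ((n-2 : ℕ) : ℤ)) * hγ2
              - tri12 θ ((n:ℝ)*θ) ((n:ℝ)*θ + θ) ((n:ℝ)*θ - θ) rfl rfl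
              - tri12 θ (((m:ℝ)*↑l - (j:ℝ) - 2)*θ) (((m:ℝ)*↑l - (j:ℝ) - 2)*θ + θ)
                  (((m:ℝ)*↑l - (j:ℝ) - 2)*θ - θ) rfl rfl
  have hpos : ∀ i : ℕ, 0 < Real.sin θ * (2*Real.cos θ)^i :=
    fun i => mul_pos hs (pow_pos (by linarith) i)
  have extract : ∀ i : ℕ, ∀ y : ℝ,
      Real.sin θ * (2*Real.cos θ)^i * lam (i:ℤ) = y → 0 < y → 0 < lam (i:ℤ) := by
    intro i y hv hy
    by_contra hx
    push_neg at hx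
    nlinarith [hpos i, hv, hy, hx]
  constructor
  · intro i hi
    obtain ⟨m, j, hj, hdec⟩ : ∃ m j, j < l ∧ i = m*l + j :=
      ⟨i/l, i%l, Nat.mod_lt _ (by omega), (Nat.div_add_mod' i l).symm⟩
    have val := key i m j hj hdec
    have h1 : 0 < Real.sin (((i:ℝ)+1)*θ) := by
      apply Real.sin_pos_of_pos_of_lt_pi
      · exact mul_pos (by positivity) hθpos
      · have hcast : ((i:ℝ)+1) < (k:ℝ)*l := by exact_mod_cast (by omega : i + 1 < k*l)
        calc ((i:ℝ)+1)*θ < ((k:ℝ)*l)*θ := by nlinarith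
        _ = Real.pi := hπ
    split_ifs at val with hcond
    · rw [add_zero] at val
      exact extract i _ val h1
    · push_neg at hcond
      obtain ⟨hc1, hc2⟩ := hcond
      have hll : l ≤ m * l := Nat.le_mul_of_pos_left l (by omega)
      have hml : m * l ≤ i := by omega
      have hlow : (↑(j:ℕ):ℝ) + 2 ≤ (m:ℝ)*↑l := by exact_mod_cast (by omega : j + 2 ≤ m*l)
      have hup : (m:ℝ)*↑l ≤ (i:ℝ) := by exact_mod_cast hml
      have hiup : (i:ℝ) + 2 ≤ (k:ℝ)*l := by exact_mod_cast (by omega : i + 2 ≤ k*l)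
      have h2 : 0 ≤ Real.sin (((m:ℝ)*↑l - ↑j - 1)*θ) := by
        apply Real.sin_nonneg_of_nonneg_of_le_pi
        · exact mul_nonneg (by linarith) hθpos.le
        · calc ((m:ℝ)*↑l - ↑j - 1)*θ ≤ ((k:ℝ)*l)*θ :=
              mul_le_mul_of_nonneg_right (by linarith) hθpos.le
          _ = Real.pi := hπ
      exact extract i _ val (by linarith)
  · have hsplit : (k-1) * l + l = k*l := by
      calc (k-1)*l + l = (k-1+1)*l := by ring
      _ = k*l := by rw [Nat.sub_add_cancel (by omega)]
    have hd : k*l - 1 = (k-1) * l + (l-1) := by omega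
    have val := key (k*l-1) (k-1) (l-1) (by omega) hd
    rw [if_pos (Or.inl (by omega))] at val
    rw [show ((↑(k*l-1):ℝ) + 1)*θ = Real.pi by
          rw [Nat.cast_sub (by omega : 1 ≤ k*l)]; push_cast; linear_combination hπ,
        Real.sin_pi, add_zero] at val
    rw [show ((k*l : ℕ) : ℤ) - 1 = ((k*l - 1 : ℕ) : ℤ) by omega]
    rcases mul_eq_zero.mp val with h | h
    · exact absurd h (hpos (k*l-1)).ne'
    · exact h
end

section
/- Fix l = 2, let n ≥ 3 be odd, and let γ = 1/(4·cos²(π/(n+1))). Then λ_i > 0 for all 1 ≤ i < n, and λ_n = 0. -/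
/-- For `l = 2`, `n ≥ 3` odd and `γ = 1/(4 cos²(π/(n+1)))`: `λ_i > 0` for
`1 ≤ i < n` and `λ_n = 0`. -/
theorem stmt_14 (n : ℕ) (hn : 3 ≤ n) (hodd : Odd n)
    (γ : ℝ) (hγ : γ = 1 / (4 * Real.cos (Real.pi / (n + 1)) ^ 2))
    (lam : ℤ → ℝ)
    (hlm1 : lam (-1) = 0)
    (hl1 : lam 1 = 1) (hl2 : lam 2 = 1)
    (hrec1 : ∀ m : ℕ, 1 ≤ m →
      lam (2 * (m : ℤ) + 1) =
        lam (2 * (m : ℤ)) - 2 * γ * lam (2 * (m : ℤ) - 1) - γ ^ 2 * lam (2 * (m : ℤ) - 3))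
    (hrec2 : ∀ m : ℕ, 1 ≤ m → lam (2 * (m : ℤ) + 2) = lam (2 * (m : ℤ) + 1)) :
    (∀ i : ℕ, 1 ≤ i → i < n → 0 < lam (i : ℤ)) ∧ lam (n : ℤ) = 0 := by
  set θ : ℝ := Real.pi / (n + 1) with hθdef
  have hnpos : (0:ℝ) < (n:ℝ) + 1 := by positivity
  have hn4 : (4:ℝ) ≤ (n:ℝ) + 1 := by
    have : (3:ℝ) ≤ (n:ℝ) := by exact_mod_cast hn
    linarith
  have hθpos : 0 < θ := div_pos Real.pi_pos hnpos
  have hθle : θ ≤ Real.pi / 4 :=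
    div_le_div_of_nonneg_left Real.pi_pos.le (by norm_num) hn4
  have hθlt : θ < Real.pi / 2 := lt_of_le_of_lt hθle (by linarith [Real.pi_pos])
  have hcos : 0 < Real.cos θ := Real.cos_pos_of_mem_Ioo ⟨by linarith, hθlt⟩
  have hγ4 : γ * (4 * Real.cos θ ^ 2) = 1 := by
    rw [hγ]; field_simp
  have hγpos : 0 < γ := by rw [hγ]; positivity
  have hsin2 : 0 < Real.sin (2 * θ) := by
    apply Real.sin_pos_of_pos_of_lt_pi (by linarith)
    linarith [Real.pi_pos]
  have hγne : γ ≠ 0 := ne_of_gt hγpos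
  have hsne : Real.sin (2 * θ) ≠ 0 := ne_of_gt hsin2
  set g : ℕ → ℝ := fun m => γ ^ m * Real.sin (2 * m * θ) / (γ * Real.sin (2 * θ)) with hgdef
  -- even indices equal preceding odd ones
  have heven : ∀ k : ℕ, 1 ≤ k → lam (2 * (k : ℤ)) = lam (2 * (k : ℤ) - 1) := by
    intro k hk
    rcases Nat.exists_eq_add_of_le hk with ⟨j, rfl⟩
    rcases Nat.eq_zero_or_pos j with rfl | hj
    · norm_num [hl1, hl2]
    · have h := hrec2 j hj
      have e : (2 * ((1 + j : ℕ) : ℤ)) = 2 * (j:ℤ) + 2 := by push_cast; ring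
      have e' : (2 * ((1 + j : ℕ) : ℤ)) - 1 = 2 * (j:ℤ) + 1 := by push_cast; ring
      rw [e', e]; exact h
  -- key trig identity
  have htrig : ∀ x : ℝ, Real.sin (x + 2 * θ) + Real.sin (x - 2 * θ)
      = 2 * Real.sin x * (2 * Real.cos θ ^ 2 - 1) := by
    intro x
    rw [Real.sin_add, Real.sin_sub, Real.cos_two_mul]
    ring
  -- closed form for odd indices, by two-step induction
  have key : ∀ m : ℕ, lam (2 * (m : ℤ) - 1) = g m ∧
      lam (2 * (((m + 1 : ℕ)) : ℤ) - 1) = g (m + 1) := by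
    intro m
    induction m with
    | zero =>
      constructor
      · have e : (2 * ((0:ℕ):ℤ) - 1) = -1 := by norm_num
        rw [e, hlm1, hgdef]; norm_num
      · have e : (2 * (((0+1:ℕ)):ℤ) - 1) = 1 := by norm_num
        rw [e, hl1, hgdef]
        norm_num
        field_simp
    | succ m ih =>
      refine ⟨ih.2, ?_⟩
      have hm1 : 1 ≤ m + 1 := Nat.le_add_left 1 m
      have hrec := hrec1 (m + 1) hm1
      have he := heven (m + 1) hm1
      have e1 : (2 * (((m + 1 + 1 : ℕ)) : ℤ) - 1) = 2 * ((m + 1 : ℕ) : ℤ) + 1 := by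
        push_cast; ring
      have e2 : (2 * ((m + 1 : ℕ) : ℤ) - 3) = 2 * ((m : ℕ) : ℤ) - 1 := by push_cast; ring
      rw [e1, hrec, he, e2, ih.1, ih.2]
      -- now pure algebra + trig
      have hid : Real.sin (2 * ((m:ℝ) + 1 + 1) * θ)
          = 2 * Real.sin (2 * ((m:ℝ) + 1) * θ) * (2 * Real.cos θ ^ 2 - 1)
            - Real.sin (2 * (m:ℝ) * θ) := by
        have h := htrig (2 * ((m:ℝ) + 1) * θ)
        have a1 : 2 * ((m:ℝ) + 1) * θ + 2 * θ = 2 * ((m:ℝ) + 1 + 1) * θ := by ring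
        have a2 : 2 * ((m:ℝ) + 1) * θ - 2 * θ = 2 * (m:ℝ) * θ := by ring
        rw [a1, a2] at h
        linarith
      rw [hgdef]
      simp only
      push_cast
      rw [hid]
      linear_combination
        (-(γ ^ (m + 1) * Real.sin (2 * ((m:ℝ) + 1) * θ) / (γ * Real.sin (2 * θ)))) * hγ4
  have hsinlt : ∀ k : ℕ, 1 ≤ k → 2 * k < n + 1 → 0 < Real.sin (2 * (k:ℝ) * θ) := by
    intro k hk hk2
    apply Real.sin_pos_of_pos_of_lt_pi
    · have : (0:ℝ) < (k:ℝ) := by exact_mod_cast hk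
      positivity
    · have h2 : 2 * (k:ℝ) < (n:ℝ) + 1 := by exact_mod_cast hk2
      rw [hθdef]
      calc 2 * (k:ℝ) * (Real.pi / ((n:ℝ) + 1))
          < ((n:ℝ) + 1) * (Real.pi / ((n:ℝ) + 1)) :=
            mul_lt_mul_of_pos_right h2 (by positivity)
        _ = Real.pi := by field_simp
  constructor
  · intro i hi1 hin
    rcases Nat.even_or_odd i with he | ho
    · rcases he with ⟨m, rfl⟩
      have hm1 : 1 ≤ m := by omega
      have hiz : ((m + m : ℕ) : ℤ) = 2 * (m : ℤ) := by push_cast; ring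
      rw [hiz, heven m hm1, (key m).1, hgdef]
      have hsp := hsinlt m hm1 (by omega)
      positivity
    · rcases ho with ⟨j, rfl⟩
      have hiz : ((2 * j + 1 : ℕ) : ℤ) = 2 * ((j + 1 : ℕ) : ℤ) - 1 := by push_cast; ring
      rw [hiz, (key j).2, hgdef]
      have hsp := hsinlt (j + 1) (by omega) (by omega)
      positivity
  · rcases hodd with ⟨j, rfl⟩
    have hiz : ((2 * j + 1 : ℕ) : ℤ) = 2 * ((j + 1 : ℕ) : ℤ) - 1 := by push_cast; ring
    rw [hiz, (key j).2, hgdef]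
    simp only
    have harg : 2 * ((j + 1 : ℕ) : ℝ) * θ = Real.pi := by
      rw [hθdef]
      field_simp
      push_cast; ring
    rw [harg, Real.sin_pi]
    simp
end

section
/- Fix an integer l ≥ 3 and an integer n with 2 ≤ n ≤ l − 1, and let γ = 1/(4·cos²(π/(n+1))). Then λ_i > 0 for all 0 ≤ i < n, and λ_n = 0. -/
/-- For `l ≥ 3`, `2 ≤ n ≤ l - 1` and `γ = 1/(4 cos²(π/(n+1)))`: `λ_i > 0` for
`0 ≤ i < n` and `λ_n = 0`. -/
theorem stmt_15 (l n : ℕ) (hl : 3 ≤ l) (hn1 : 2 ≤ n) (hn2 : n ≤ l - 1)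
    (γ : ℝ) (hγ : γ = 1 / (4 * Real.cos (Real.pi / (n + 1)) ^ 2))
    (lam : ℤ → ℝ)
    (hlneg : ∀ m : ℤ, m < 0 → lam m = 0)
    (hl0 : lam 0 = 1) (hl1 : lam 1 = 1)
    (hrec0 : ∀ m : ℕ, 2 ≤ m → m % l = 0 → lam (m : ℤ) = lam ((m : ℤ) - 1))
    (hrec1 : ∀ m : ℕ, 2 ≤ m → m % l = 1 →
      lam (m : ℤ) = lam ((m : ℤ) - 1) - 2 * γ * lam ((m : ℤ) - 2))
    (hrecl : ∀ m : ℕ, 2 ≤ m → m % l = l - 1 →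
      lam (m : ℤ) = lam ((m : ℤ) - 1) - γ * lam ((m : ℤ) - 2) - γ ^ l * lam ((m : ℤ) - 2 * l))
    (hrece : ∀ m : ℕ, 2 ≤ m → m % l ≠ 0 → m % l ≠ 1 → m % l ≠ l - 1 →
      lam (m : ℤ) = lam ((m : ℤ) - 1) - γ * lam ((m : ℤ) - 2)) :
    (∀ i : ℕ, i < n → 0 < lam (i : ℤ)) ∧ lam (n : ℤ) = 0 := by
  set θ : ℝ := Real.pi / (n + 1) with hθ
  have hnR : (2:ℝ) ≤ (n:ℝ) := by exact_mod_cast hn1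
  have hn1pos : (0:ℝ) < (n:ℝ) + 1 := by linarith
  have hπ := Real.pi_pos
  have hθpos : 0 < θ := by rw [hθ]; positivity
  have hθle : θ ≤ Real.pi / 3 := by
    rw [hθ, div_le_div_iff₀ hn1pos (by norm_num)]
    nlinarith
  have hθltπ : θ < Real.pi := by linarith
  have hθlt2 : θ < Real.pi / 2 := by linarith
  have hcos : 0 < Real.cos θ :=
    Real.cos_pos_of_mem_Ioo ⟨by linarith, hθlt2⟩
  have hsin : 0 < Real.sin θ := Real.sin_pos_of_pos_of_lt_pi hθpos hθltπ
  set C : ℝ := 2 * Real.cos θ with hCdef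
  have hC : 0 < C := by positivity
  have hCne : C ≠ 0 := ne_of_gt hC
  have hSne : Real.sin θ ≠ 0 := ne_of_gt hsin
  have hγ' : γ = 1 / C ^ 2 := by rw [hγ, hCdef]; ring_nf
  have hln : n < l := by omega
  -- closed form
  have key : ∀ m : ℕ, m ≤ n → lam (m : ℤ) =
      Real.sin (((m : ℝ) + 1) * θ) / (Real.sin θ * C ^ m) := by
    intro m
    induction m using Nat.strong_induction_on with
    | _ m ih =>
      match m with
      | 0 =>
        intro _
        simp [hl0, hSne]
      | 1 =>
        intro _
        push_cast
        rw [hl1, show ((1:ℝ) + 1) * θ = 2 * θ by ring,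
          Real.sin_two_mul, hCdef]
        field_simp
      | (k + 2) =>
        intro hm
        have hml : (k + 2) % l = k + 2 := Nat.mod_eq_of_lt (by omega)
        have e1 : ((k + 2 : ℕ) : ℤ) - 1 = ((k + 1 : ℕ) : ℤ) := by push_cast; ring
        have e2 : ((k + 2 : ℕ) : ℤ) - 2 = ((k : ℕ) : ℤ) := by push_cast; ring
        have hrec : lam ((k + 2 : ℕ) : ℤ) =
            lam ((k + 1 : ℕ) : ℤ) - γ * lam ((k : ℕ) : ℤ) := by
          by_cases hcase : k + 2 = l - 1
          · have h := hrecl (k + 2) (by omega) (by rw [hml]; exact hcase)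
            have hz : lam (((k + 2 : ℕ) : ℤ) - 2 * l) = 0 := by
              apply hlneg
              omega
            rw [e1, e2, hz] at h
            rw [h]; ring
          · have h := hrece (k + 2) (by omega) (by omega) (by omega)
              (by rw [hml]; exact hcase)
            rw [e1, e2] at h
            exact h
        have ih1 := ih (k + 1) (by omega) (by omega)
        have ih0 := ih k (by omega) (by omega)
        have trig : Real.sin (((k : ℝ) + 3) * θ) =
            2 * Real.cos θ * Real.sin (((k : ℝ) + 2) * θ) -
              Real.sin (((k : ℝ) + 1) * θ) := by
          rw [show ((k : ℝ) + 3) * θ = ((k : ℝ) + 2) * θ + θ by ring,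
            show ((k : ℝ) + 1) * θ = ((k : ℝ) + 2) * θ - θ by ring,
            Real.sin_add, Real.sin_sub]
          ring
        rw [hrec, ih1, ih0, hγ']
        push_cast
        rw [show ((k : ℝ) + 2 + 1) * θ = ((k : ℝ) + 3) * θ by ring, trig]
        rw [show ((k : ℝ) + 1 + 1) * θ = ((k : ℝ) + 2) * θ by ring]
        field_simp
        ring
  constructor
  · intro i hi
    rw [key i (le_of_lt hi)]
    have h1 : (0:ℝ) < ((i : ℝ) + 1) * θ := by positivity
    have h2 : ((i : ℝ) + 1) * θ < Real.pi := by
      have hi' : (i : ℝ) + 1 ≤ (n : ℝ) := by exact_mod_cast hi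
      have : ((i : ℝ) + 1) * θ ≤ (n : ℝ) * θ :=
        mul_le_mul_of_nonneg_right hi' (le_of_lt hθpos)
      have h3 : (n : ℝ) * θ < Real.pi := by
        rw [hθ, mul_div_assoc', div_lt_iff₀ hn1pos]
        nlinarith
      linarith
    have := Real.sin_pos_of_pos_of_lt_pi h1 h2
    positivity
  · rw [key n le_rfl]
    have : ((n : ℝ) + 1) * θ = Real.pi := by
      rw [hθ]; field_simp
    rw [this, Real.sin_pi, zero_div]
end

section
/- Fix an integer l ≥ 3, let r ∈ ℂ with r ≠ 0, r² ≠ 1 and r + r⁻¹ ≠ 0, and set γ := (r + r⁻¹)^{−2}. Then for every n ≥ l with n + 1 ≢ 0 (mod l), setting j := (n+1) mod l, one has λ_n = ([n+1]_r + [n+1−2j]_r)/(r + r⁻¹)^n. -/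
noncomputable def qint (r : ℂ) (m : ℤ) : ℂ := (r ^ m - r ^ (-m)) / (r - r⁻¹)

lemma qint_rec (r : ℂ) (hr0 : r ≠ 0) (m : ℤ) :
    qint r (m + 1) = (r + r⁻¹) * qint r m - qint r (m - 1) := by
  have e1 : r ^ (m+1) = r ^ m * r := zpow_add_one₀ hr0 m
  have e2 : r ^ (-(m+1)) = r ^ (-m) * r⁻¹ := by
    rw [(by ring : -(m+1) = -m + -1), zpow_add₀ hr0, zpow_neg_one]
  have e3 : r ^ (m-1) = r ^ m * r⁻¹ := by
    rw [(by ring : m - 1 = m + -1), zpow_add₀ hr0, zpow_neg_one]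
  have e4 : r ^ (-(m-1)) = r ^ (-m) * r := by
    rw [(by ring : -(m-1) = -m + 1), zpow_add₀ hr0, zpow_one]
  simp only [qint, e1, e2, e3, e4]
  rw [← mul_div_assoc, div_sub_div_same]
  congr 1
  ring

lemma mod_eq_of_rep (l M s : ℕ) (hM : M % l = 0) (hs : s < l) : (M + s) % l = s := by
  obtain ⟨q, rfl⟩ := Nat.dvd_of_mod_eq_zero hM
  rw [Nat.add_comm, Nat.add_mul_mod_self_left, Nat.mod_eq_of_lt hs]

lemma exists_rep (l n : ℕ) : ∃ M, n = M + n % l ∧ M % l = 0 := by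
  refine ⟨l * (n / l), ?_, Nat.mul_mod_right l _⟩
  rw [Nat.div_add_mod]



/-- For `l ≥ 3` and `γ = (r + r⁻¹)⁻²`, for every non-critical `n ≥ l` with
`j = (n+1) mod l` one has `λ_n = ([n+1]_r + [n+1-2j]_r)/(r + r⁻¹)^n`. -/
theorem stmt_18 (l : ℕ) (hl : 3 ≤ l)
    (r : ℂ) (hr0 : r ≠ 0) (hr2 : r ^ 2 ≠ 1) (hrr : r + r⁻¹ ≠ 0)
    (γ : ℂ) (hγ : γ = ((r + r⁻¹) ^ 2)⁻¹)
    (lam : ℤ → ℂ)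
    (hlneg : ∀ m : ℤ, m < 0 → lam m = 0)
    (hl0 : lam 0 = 1) (hl1 : lam 1 = 1)
    (hrec0 : ∀ m : ℕ, 2 ≤ m → m % l = 0 → lam (m : ℤ) = lam ((m : ℤ) - 1))
    (hrec1 : ∀ m : ℕ, 2 ≤ m → m % l = 1 →
      lam (m : ℤ) = lam ((m : ℤ) - 1) - 2 * γ * lam ((m : ℤ) - 2))
    (hrecl : ∀ m : ℕ, 2 ≤ m → m % l = l - 1 →
      lam (m : ℤ) = lam ((m : ℤ) - 1) - γ * lam ((m : ℤ) - 2) - γ ^ l * lam ((m : ℤ) - 2 * l))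
    (hrece : ∀ m : ℕ, 2 ≤ m → m % l ≠ 0 → m % l ≠ 1 → m % l ≠ l - 1 →
      lam (m : ℤ) = lam ((m : ℤ) - 1) - γ * lam ((m : ℤ) - 2)) :
    ∀ n : ℕ, l ≤ n → (n + 1) % l ≠ 0 →
      lam (n : ℤ) =
        ((r ^ ((n : ℤ) + 1) - r ^ (-((n : ℤ) + 1))) / (r - r⁻¹) +
          (r ^ ((n : ℤ) + 1 - 2 * (((n + 1) % l : ℕ) : ℤ)) -
            r ^ (-((n : ℤ) + 1 - 2 * (((n + 1) % l : ℕ) : ℤ)))) / (r - r⁻¹)) /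
        (r + r⁻¹) ^ n := by
  have hrd : r - r⁻¹ ≠ 0 := by
    intro h
    apply hr2
    have h1 : r = r⁻¹ := sub_eq_zero.mp h
    rw [sq]
    nth_rewrite 2 [h1]
    exact mul_inv_cancel₀ hr0
  obtain ⟨Q, hQdef⟩ : ∃ q : ℂ, q = r + r⁻¹ := ⟨_, rfl⟩
  have hQ : Q ≠ 0 := by rw [hQdef]; exact hrr
  have hγQ : γ = (Q ^ 2)⁻¹ := by rw [hQdef]; exact hγ
  have key : ∀ m : ℤ, qint r (m + 1) = Q * qint r m - qint r (m - 1) := by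
    intro m; rw [hQdef]; exact qint_rec r hr0 m
  have key2 : ∀ m : ℤ, qint r (m + 2) = Q * qint r (m + 1) - qint r m := by
    intro m
    have h := key (m + 1)
    rw [show m+1+1 = m+2 by ring, show m+1-1 = m by ring] at h
    exact h
  have key3 : ∀ m : ℤ, qint r (m + 3) = Q * qint r (m + 2) - qint r (m + 1) := by
    intro m
    have h := key (m + 2)
    rw [show m+2+1 = m+3 by ring, show m+2-1 = m+1 by ring] at h
    exact h
  have hq0 : qint r 0 = 0 := by simp [qint]
  have hq1 : qint r 1 = 1 := by
    simp only [qint, zpow_one, zpow_neg_one]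
    exact div_self hrd
  have hq2 : qint r 2 = Q := by
    have h := key2 0
    norm_num [hq0, hq1] at h
    exact h
  have base : ∀ n : ℕ, n + 1 ≤ l → lam (n : ℤ) = qint r ((n : ℤ) + 1) / Q ^ n := by
    intro n
    induction n using Nat.strong_induction_on with
    | _ n ih =>
      intro hn
      match n, ih, hn with
      | 0, _, _ => norm_num [hq1, hl0]
      | 1, _, _ => norm_num [hq2, hl1, pow_one, div_self hQ]
      | (m+2), ih, hn =>
        have h2 : 2 ≤ m + 2 := by omega
        have hmod : (m+2) % l = m + 2 := Nat.mod_eq_of_lt (by omega)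
        have hrecv : lam ((m:ℤ) + 2) = lam ((m:ℤ) + 1) - γ * lam (m:ℤ) := by
          by_cases hc : m + 2 = l - 1
          · have h := hrecl (m+2) h2 (by rw [hmod, hc])
            push_cast at h
            rw [hlneg ((m:ℤ) + 2 - 2*l) (by omega)] at h
            rw [show (m:ℤ)+2-1 = (m:ℤ)+1 by ring, show (m:ℤ)+2-2 = (m:ℤ) by ring] at h
            rw [h]; ring
          · have h := hrece (m+2) h2 (by omega) (by omega) (by rw [hmod]; exact hc)
            push_cast at h
            rw [show (m:ℤ)+2-1 = (m:ℤ)+1 by ring, show (m:ℤ)+2-2 = (m:ℤ) by ring] at h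
            exact h
        have ih1 := ih (m+1) (by omega) (by omega)
        have ih0 := ih m (by omega) (by omega)
        push_cast at ih1 ih0 ⊢
        rw [show (m:ℤ)+1+1 = (m:ℤ)+2 by ring] at ih1
        rw [show (m:ℤ)+2+1 = (m:ℤ)+3 by ring]
        rw [hrecv, ih1, ih0, key3 (m:ℤ), hγQ]
        field_simp
        ring
  have main : ∀ n : ℕ, l ≤ n + 1 →
      lam (n : ℤ) = (if (n + 1) % l = 0 then qint r ((n : ℤ) + 1)
        else qint r ((n : ℤ) + 1) + qint r ((n : ℤ) + 1 - 2 * (((n + 1) % l : ℕ) : ℤ))) / Q ^ n := by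
    intro n
    induction n using Nat.strong_induction_on with
    | _ n ih =>
      intro hn
      by_cases hcrit : n + 1 = l
      · have hmm : (n + 1) % l = 0 := by rw [hcrit, Nat.mod_self]
        rw [hmm, if_pos rfl]
        exact base n (by omega)
      · have hnl : l ≤ n := by omega
        obtain ⟨M, hM, hMl⟩ := exists_rep l n
        have hsl : n % l < l := Nat.mod_lt _ (by omega)
        by_cases h0 : n % l = 0
        · -- CASE A : n ≡ 0 (mod l)
          rw [h0] at hM
          have hdl : l ∣ n - l := Nat.dvd_sub (Nat.dvd_of_mod_eq_zero h0) dvd_rfl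
          have hz0 : (n - l) % l = 0 := by
            obtain ⟨t, ht⟩ := hdl; rw [ht]; exact Nat.mul_mod_right l t
          have hm1 : (n - 1) % l = l - 1 := by
            rw [show n - 1 = (n - l) + (l - 1) by omega]
            exact mod_eq_of_rep l (n - l) (l - 1) hz0 (by omega)
          have hm2 : (n + 1) % l = 1 := by
            rw [show n + 1 = M + 1 by omega]
            exact mod_eq_of_rep l M 1 hMl (by omega)
          obtain ⟨k, rfl⟩ : ∃ k, n = k + 1 := ⟨n - 1, by omega⟩
          have ihk := ih k (by omega) (by omega)
          rw [h0, if_pos rfl] at ihk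
          push_cast at ihk
          have hrecv := hrec0 (k + 1) (by omega) h0
          push_cast at hrecv
          rw [show (k : ℤ) + 1 - 1 = (k : ℤ) by ring] at hrecv
          rw [hm2, if_neg (by omega)]
          push_cast
          rw [show (k : ℤ) + 1 + 1 - 2 = (k : ℤ) by ring,
            show (k : ℤ) + 1 + 1 = (k : ℤ) + 2 by ring]
          rw [hrecv, ihk, key2 (k : ℤ)]
          field_simp
          ring
        · by_cases h1 : n % l = 1
          · -- CASE B : n ≡ 1 (mod l)
            rw [h1] at hM
            have hm2 : (n + 1) % l = 2 := by
              rw [show n + 1 = M + 2 by omega]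
              exact mod_eq_of_rep l M 2 hMl (by omega)
            have hm1 : (n - 1) % l = 0 := by rw [show n - 1 = M by omega]; exact hMl
            have hMge : l ≤ M := by
              rcases Nat.lt_or_ge M l with h | h
              · rw [Nat.mod_eq_of_lt h] at hMl; omega
              · exact h
            obtain ⟨k, rfl⟩ : ∃ k, n = k + 2 := ⟨n - 2, by omega⟩
            rw [show k + 2 - 1 = k + 1 from rfl] at hm1
            have ih1 := ih (k + 1) (by omega) (by omega)
            rw [show k + 1 + 1 = k + 2 from rfl, h1, if_neg (by omega)] at ih1
            push_cast at ih1
            rw [show (k : ℤ) + 1 + 1 - 2 = (k : ℤ) by ring,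
              show (k : ℤ) + 1 + 1 = (k : ℤ) + 2 by ring] at ih1
            have ih0 := ih k (by omega) (by omega)
            rw [hm1, if_pos rfl] at ih0
            push_cast at ih0
            have hrecv := hrec1 (k + 2) (by omega) h1
            push_cast at hrecv
            rw [show (k : ℤ) + 2 - 1 = (k : ℤ) + 1 by ring,
              show (k : ℤ) + 2 - 2 = (k : ℤ) by ring] at hrecv
            rw [hm2, if_neg (by omega)]
            push_cast
            rw [show (k : ℤ) + 2 + 1 - 4 = (k : ℤ) - 1 by ring,
              show (k : ℤ) + 2 + 1 = (k : ℤ) + 3 by ring]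
            rw [hrecv, ih1, ih0, key3 (k : ℤ), key (k : ℤ), hγQ]
            field_simp
            ring
          · by_cases hc : n % l = l - 1
            · -- CASE C : n ≡ l-1 (mod l), critical target
              rw [hc] at hM
              have hMge : l ≤ M := by
                rcases Nat.lt_or_ge M l with h | h
                · rw [Nat.mod_eq_of_lt h] at hMl; omega
                · exact h
              have hm0 : (n + 1) % l = 0 := by
                rw [show n + 1 = M + l by omega, Nat.add_mod_right]; exact hMl
              have hm1 : (n - 1) % l = l - 2 := by
                rw [show n - 1 = M + (l - 2) by omega]
                exact mod_eq_of_rep l M (l - 2) hMl (by omega)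
              have hMcase : M = l ∨ 2 * l ≤ M := by
                obtain ⟨t, rfl⟩ := Nat.dvd_of_mod_eq_zero hMl
                match t with
                | 0 => simp at hMge; omega
                | 1 => left; exact (Nat.mul_one l)
                | (t + 2) =>
                  right
                  calc 2 * l = l * 2 := by ring
                  _ ≤ l * (t + 2) := Nat.mul_le_mul_left l (by omega)
              rw [hm0, if_pos rfl]
              rcases hMcase with hsmall | hbig
              · -- n = 2l - 1
                obtain ⟨k, rfl⟩ : ∃ k, n = k + 2 := ⟨n - 2, by omega⟩
                rw [show k + 2 - 1 = k + 1 from rfl] at hm1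
                have ih1 := ih (k + 1) (by omega) (by omega)
                rw [show k + 1 + 1 = k + 2 from rfl, hc, if_neg (by omega)] at ih1
                rw [show ((l - 1 : ℕ) : ℤ) = (l : ℤ) - 1 by omega] at ih1
                push_cast at ih1
                rw [show (k : ℤ) + 1 + 1 - 2 * ((l : ℤ) - 1) = 1 by omega,
                  show (k : ℤ) + 1 + 1 = 2 * (l : ℤ) - 1 by omega] at ih1
                have ih0 := ih k (by omega) (by omega)
                rw [hm1, if_neg (by omega)] at ih0
                rw [show ((l - 2 : ℕ) : ℤ) = (l : ℤ) - 2 by omega] at ih0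
                push_cast at ih0
                rw [show (k : ℤ) + 1 - 2 * ((l : ℤ) - 2) = 2 by omega,
                  show (k : ℤ) + 1 = 2 * (l : ℤ) - 2 by omega] at ih0
                have hrecv := hrecl (k + 2) (by omega) hc
                push_cast at hrecv
                rw [hlneg ((k : ℤ) + 2 - 2 * (l : ℤ)) (by omega), mul_zero, sub_zero] at hrecv
                rw [show (k : ℤ) + 2 - 1 = (k : ℤ) + 1 by ring,
                  show (k : ℤ) + 2 - 2 = (k : ℤ) by ring] at hrecv
                have hkey : qint r (2 * (l : ℤ)) =
                    Q * qint r (2 * (l : ℤ) - 1) - qint r (2 * (l : ℤ) - 2) := by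
                  have h := key (2 * (l : ℤ) - 1)
                  rw [show 2 * (l : ℤ) - 1 + 1 = 2 * (l : ℤ) by ring,
                    show 2 * (l : ℤ) - 1 - 1 = 2 * (l : ℤ) - 2 by ring] at h
                  exact h
                push_cast
                rw [show (k : ℤ) + 2 + 1 = 2 * (l : ℤ) by omega]
                rw [hrecv, ih1, ih0, hkey, hq1, hq2, hγQ]
                field_simp
                ring
              · -- n ≥ 3l - 1
                obtain ⟨w, hw⟩ : ∃ w, 2 * l = w + 2 := ⟨2 * l - 2, by omega⟩
                obtain ⟨u, rfl⟩ : ∃ u, n = u + w + 2 := ⟨n - 2 * l, by omega⟩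
                rw [show u + w + 2 - 1 = u + w + 1 from rfl] at hm1
                have hdl : l ∣ M - l := Nat.dvd_sub (Nat.dvd_of_mod_eq_zero hMl) dvd_rfl
                have hu1 : (u + 1) % l = 0 := by
                  obtain ⟨t, ht⟩ := hdl
                  rw [show u + 1 = M - l by omega, ht]
                  exact Nat.mul_mod_right l t
                have ih1 := ih (u + w + 1) (by omega) (by omega)
                rw [show u + w + 1 + 1 = u + w + 2 from rfl, hc, if_neg (by omega)] at ih1
                rw [show ((l - 1 : ℕ) : ℤ) = (l : ℤ) - 1 by omega] at ih1
                push_cast at ih1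
                rw [show (u : ℤ) + (w : ℤ) + 1 + 1 - 2 * ((l : ℤ) - 1) = (u : ℤ) + 2 by omega,
                  show (u : ℤ) + (w : ℤ) + 1 + 1 = (u : ℤ) + 2 * (l : ℤ) by omega] at ih1
                have ih0 := ih (u + w) (by omega) (by omega)
                rw [hm1, if_neg (by omega)] at ih0
                rw [show ((l - 2 : ℕ) : ℤ) = (l : ℤ) - 2 by omega] at ih0
                push_cast at ih0
                rw [show (u : ℤ) + (w : ℤ) + 1 - 2 * ((l : ℤ) - 2) = (u : ℤ) + 3 by omega,
                  show (u : ℤ) + (w : ℤ) + 1 = (u : ℤ) + 2 * (l : ℤ) - 1 by omega] at ih0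
                have ihu := ih u (by omega) (by omega)
                rw [hu1, if_pos rfl] at ihu
                push_cast at ihu
                have hrecv := hrecl (u + w + 2) (by omega) hc
                push_cast at hrecv
                rw [show (u : ℤ) + (w : ℤ) + 2 - 1 = (u : ℤ) + (w : ℤ) + 1 by ring,
                  show (u : ℤ) + (w : ℤ) + 2 - 2 = (u : ℤ) + (w : ℤ) by ring,
                  show (u : ℤ) + (w : ℤ) + 2 - 2 * (l : ℤ) = (u : ℤ) by omega] at hrecv
                have hgl : γ ^ l = (Q ^ (w + 2))⁻¹ := by
                  rw [hγQ, inv_pow, ← pow_mul, hw]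
                have hterm : γ ^ l * (qint r ((u : ℤ) + 1) / Q ^ u) =
                    qint r ((u : ℤ) + 1) / Q ^ (u + w + 2) := by
                  rw [hgl, mul_comm, ← div_eq_mul_inv, div_div, ← pow_add,
                    show u + (w + 2) = u + w + 2 by ring]
                have hlift : ∀ (a : ℂ) (m : ℕ), a / Q ^ m = Q * a / Q ^ (m + 1) := by
                  intro a m
                  rw [pow_succ, mul_comm (Q ^ m) Q]
                  exact (mul_div_mul_left a (Q ^ m) hQ).symm
                have h2' : (Q ^ 2)⁻¹ * ((qint r ((u : ℤ) + 2 * (l : ℤ) - 1) + qint r ((u : ℤ) + 3))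
                      / Q ^ (u + w)) =
                    (qint r ((u : ℤ) + 2 * (l : ℤ) - 1) + qint r ((u : ℤ) + 3)) / Q ^ (u + w + 2) := by
                  rw [mul_comm, ← div_eq_mul_inv, div_div, ← pow_add]
                push_cast
                rw [show (u : ℤ) + (w : ℤ) + 2 + 1 = (u : ℤ) + 2 * (l : ℤ) + 1 by omega]
                rw [hrecv, ih1, ih0, ihu, hterm, hγQ, h2',
                  hlift (qint r ((u : ℤ) + 2 * (l : ℤ)) + qint r ((u : ℤ) + 2)) (u + w + 1),
                  show u + w + 1 + 1 = u + w + 2 from rfl,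
                  div_sub_div_same, div_sub_div_same,
                  key ((u : ℤ) + 2 * (l : ℤ)), key3 (u : ℤ)]
                congr 1
                ring
            · -- CASE D : generic
              obtain ⟨s, hs⟩ : ∃ s, n % l = s := ⟨_, rfl⟩
              rw [hs] at h0 h1 hc hM
              have hm2 : (n + 1) % l = s + 1 := by
                rw [show n + 1 = M + (s + 1) by omega]
                exact mod_eq_of_rep l M (s + 1) hMl (by omega)
              have hm1 : (n - 1) % l = s - 1 := by
                rw [show n - 1 = M + (s - 1) by omega]
                exact mod_eq_of_rep l M (s - 1) hMl (by omega)
              have hMge : l ≤ M := by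
                rcases Nat.lt_or_ge M l with h | h
                · rw [Nat.mod_eq_of_lt h] at hMl; omega
                · exact h
              obtain ⟨k, rfl⟩ : ∃ k, n = k + 2 := ⟨n - 2, by omega⟩
              rw [show k + 2 - 1 = k + 1 from rfl] at hm1
              have ih1 := ih (k + 1) (by omega) (by omega)
              rw [show k + 1 + 1 = k + 2 from rfl, hs, if_neg h0] at ih1
              push_cast at ih1
              rw [show (k : ℤ) + 1 + 1 = (k : ℤ) + 2 by ring] at ih1
              have ih0 := ih k (by omega) (by omega)
              rw [hm1, if_neg (by omega)] at ih0
              rw [show ((s - 1 : ℕ) : ℤ) = (s : ℤ) - 1 by omega] at ih0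
              push_cast at ih0
              rw [show (k : ℤ) + 1 - 2 * ((s : ℤ) - 1) = (k : ℤ) + 3 - 2 * (s : ℤ) by ring] at ih0
              have hrecv := hrece (k + 2) (by omega) (by rw [hs]; exact h0)
                (by rw [hs]; exact h1) (by rw [hs]; exact hc)
              push_cast at hrecv
              rw [show (k : ℤ) + 2 - 1 = (k : ℤ) + 1 by ring,
                show (k : ℤ) + 2 - 2 = (k : ℤ) by ring] at hrecv
              have hkey : qint r ((k : ℤ) + 3 - 2 * (s : ℤ)) =
                  Q * qint r ((k : ℤ) + 2 - 2 * (s : ℤ)) - qint r ((k : ℤ) + 1 - 2 * (s : ℤ)) := by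
                have h := key ((k : ℤ) + 2 - 2 * (s : ℤ))
                rw [show (k : ℤ) + 2 - 2 * (s : ℤ) + 1 = (k : ℤ) + 3 - 2 * (s : ℤ) by ring,
                  show (k : ℤ) + 2 - 2 * (s : ℤ) - 1 = (k : ℤ) + 1 - 2 * (s : ℤ) by ring] at h
                exact h
              rw [hm2, if_neg (by omega)]
              push_cast
              rw [show (k : ℤ) + 2 + 1 - 2 * ((s : ℤ) + 1) = (k : ℤ) + 1 - 2 * (s : ℤ) by ring,
                show (k : ℤ) + 2 + 1 = (k : ℤ) + 3 by ring]
              rw [hrecv, ih1, ih0, key3 (k : ℤ), hkey, hγQ]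
              field_simp
              ring
  intro n hn hnc
  have h := main n (by omega)
  rw [if_neg hnc] at h
  rw [hQdef] at h
  simpa only [qint] using h
end
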